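/- arXiv:1704.04821 — 9 statements merged into one kernel-verified Lean document; each statement's English description precedes it below -/
import Mathlib

section
/- Let λ > 0 and let h_f, h_b : [0,1] → ℝ be continuous on [0,1] and twice differentiable on (0,1), satisfying the differential inequalities h_f''(t) ≥ −λ·h_f'(t) and h_b''(t) ≥ λ·h_b'(t) for all t ∈ (0,1). Then for every t ∈ [0,1]: h_f(t) + h_b(t) ≤ (h_f(0) + h_b(0))·(1 − exp(−λ(1−t)))/(1 − exp(−λ)) + (h_f(1) + h_b(1))·(1 − exp(−λt))/(1 − exp(−λ)) − (h_f(0) + h_b(1))·(cosh(λ/2) − cosh(λ(t − 1/2)))/sinh(λ/2). -/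
open Set Real

lemma key (μ : ℝ) (hμ : μ ≠ 0) (u : ℝ → ℝ)
    (uc : ContinuousOn u (Set.Icc 0 1))
    (ud : ∀ t ∈ Set.Ioo (0:ℝ) 1, DifferentiableAt ℝ u t)
    (ud2 : ∀ t ∈ Set.Ioo (0:ℝ) 1, DifferentiableAt ℝ (deriv u) t)
    (uineq : ∀ t ∈ Set.Ioo (0:ℝ) 1, deriv (deriv u) t ≥ -μ * deriv u t) :
    ∀ t ∈ Set.Icc (0:ℝ) 1,
      u t ≤ u 0 * (1 - (1 - Real.exp (-(μ*t))) / (1 - Real.exp (-μ)))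
          + u 1 * ((1 - Real.exp (-(μ*t))) / (1 - Real.exp (-μ))) := by
  intro t ht
  set D : ℝ := 1 - Real.exp (-μ) with hDdef
  have hD : D ≠ 0 := by
    simp only [hDdef, sub_ne_zero]
    intro h
    have : Real.exp (-μ) = Real.exp 0 := by simpa using h.symm
    exact hμ (by simpa [neg_eq_zero] using Real.exp_injective this)
  set φ : ℝ → ℝ := fun s => (1 - Real.exp (-(μ*s))) / D with hφdef
  set w : ℝ → ℝ := fun s => u 0 * (1 - φ s) + u 1 * φ s - u s with hwdef
  have hφ0 : φ 0 = 0 := by simp [hφdef]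
  have hφ1 : φ 1 = 1 := by
    simp only [hφdef, hDdef, mul_one]
    exact div_self hD
  have hw0 : w 0 = 0 := by simp [hwdef, hφ0]
  have hw1 : w 1 = 0 := by simp [hwdef, hφ1]
  -- suffices 0 ≤ w t
  have main : 0 ≤ w t := by
    by_contra hcon
    push_neg at hcon
    have ht0 : t ≠ 0 := fun h => by simp [h, hw0] at hcon
    have ht1 : t ≠ 1 := fun h => by simp [h, hw1] at hcon
    have htIoo : t ∈ Set.Ioo (0:ℝ) 1 :=
      ⟨lt_of_le_of_ne ht.1 (Ne.symm ht0), lt_of_le_of_ne ht.2 ht1⟩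
    -- derivatives
    have hφd : ∀ s : ℝ, HasDerivAt φ (μ * Real.exp (-(μ*s)) / D) s := by
      intro s
      have h1 : HasDerivAt (fun s : ℝ => -(μ*s)) (-μ) s := by
        simpa using ((hasDerivAt_id s).const_mul μ).fun_neg
      have h2 : HasDerivAt (fun s : ℝ => Real.exp (-(μ*s))) (Real.exp (-(μ*s)) * (-μ)) s :=
        h1.exp
      have h3 := ((hasDerivAt_const s (1:ℝ)).sub h2).div_const D
      convert h3 using 1
      · rfl
      · rfl
      · rfl
      ring
    set p : ℝ → ℝ := fun s => (u 1 - u 0) * (μ * Real.exp (-(μ*s)) / D) - deriv u s with hpdef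
    have hw' : ∀ s ∈ Set.Ioo (0:ℝ) 1, HasDerivAt w (p s) s := by
      intro s hs
      have h1 := ((hasDerivAt_const s (1:ℝ)).sub (hφd s)).const_mul (u 0)
      have h2 := (hφd s).const_mul (u 1)
      have h3 := (ud s hs).hasDerivAt
      have := (h1.add h2).sub h3
      convert this using 1
      · rfl
      · rfl
      · rfl
      simp only [hpdef]
      ring
    have hderivw : ∀ s ∈ Set.Ioo (0:ℝ) 1, deriv w s = p s := fun s hs => (hw' s hs).deriv
    set q : ℝ → ℝ := fun s => (u 1 - u 0) * (-(μ*μ) * Real.exp (-(μ*s)) / D) - deriv (deriv u) s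
      with hqdef
    have hp' : ∀ s ∈ Set.Ioo (0:ℝ) 1, HasDerivAt p (q s) s := by
      intro s hs
      have h1 : HasDerivAt (fun s : ℝ => -(μ*s)) (-μ) s := by
        simpa using ((hasDerivAt_id s).const_mul μ).fun_neg
      have h2 : HasDerivAt (fun s : ℝ => Real.exp (-(μ*s))) (Real.exp (-(μ*s)) * (-μ)) s :=
        h1.exp
      have h3 := ((h2.const_mul μ).div_const D).const_mul (u 1 - u 0)
      have h4 := (ud2 s hs).hasDerivAt
      have := h3.sub h4
      convert this using 1
      · rfl
      · rfl
      · rfl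
      simp only [hqdef]
      ring
    set g : ℝ → ℝ := fun s => Real.exp (μ*s) * p s with hgdef
    have hg' : ∀ s ∈ Set.Ioo (0:ℝ) 1,
        HasDerivAt g (Real.exp (μ*s) * (μ * p s + q s)) s := by
      intro s hs
      have h1 : HasDerivAt (fun s : ℝ => Real.exp (μ*s)) (Real.exp (μ*s) * μ) s :=
        (by simpa using (hasDerivAt_id s).const_mul μ : HasDerivAt (fun s : ℝ => μ*s) μ s).exp
      have := h1.mul (hp' s hs)
      convert this using 1
      · rfl
      · rfl
      · rfl
      ring
    have hgnonpos : ∀ s ∈ Set.Ioo (0:ℝ) 1, μ * p s + q s ≤ 0 := by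
      intro s hs
      have h1 : μ * p s + q s = -(deriv (deriv u) s + μ * deriv u s) := by
        simp only [hpdef, hqdef]
        field_simp
        ring
      rw [h1]
      have := uineq s hs
      linarith
    have hganti : AntitoneOn g (Set.Ioo (0:ℝ) 1) := by
      apply antitoneOn_of_deriv_nonpos (convex_Ioo 0 1)
      · exact fun s hs => ((hg' s hs).continuousAt).continuousWithinAt
      · intro s hs
        rw [interior_Ioo] at hs
        exact (hg' s hs).differentiableAt.differentiableWithinAt
      · intro s hs
        rw [interior_Ioo] at hs
        rw [(hg' s hs).deriv]
        exact mul_nonpos_of_nonneg_of_nonpos (Real.exp_pos _).le (hgnonpos s hs)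
    -- continuity of w
    have hφc : Continuous φ := by
      apply Continuous.div_const
      exact continuous_const.sub (Real.continuous_exp.comp ((continuous_const.mul continuous_id).neg))
    have hwc : ContinuousOn w (Set.Icc 0 1) := by
      apply ContinuousOn.sub
      · exact ((continuous_const.mul (continuous_const.sub hφc)).add
          (continuous_const.mul hφc)).continuousOn
      · exact uc
    -- MVT on [0,t]
    obtain ⟨a, haIoo, hadw⟩ := exists_deriv_eq_slope w htIoo.1
      (hwc.mono (Set.Icc_subset_Icc le_rfl ht.2))
      (fun x hx => (hw' x ⟨hx.1, lt_of_lt_of_le hx.2 ht.2⟩).differentiableAt.differentiableWithinAt)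
    obtain ⟨b, hbIoo, hbdw⟩ := exists_deriv_eq_slope w htIoo.2
      (hwc.mono (Set.Icc_subset_Icc ht.1 le_rfl))
      (fun x hx => (hw' x ⟨lt_of_le_of_lt ht.1 hx.1, hx.2⟩).differentiableAt.differentiableWithinAt)
    have haIoo1 : a ∈ Set.Ioo (0:ℝ) 1 := ⟨haIoo.1, lt_trans haIoo.2 htIoo.2⟩
    have hbIoo1 : b ∈ Set.Ioo (0:ℝ) 1 := ⟨lt_trans htIoo.1 hbIoo.1, hbIoo.2⟩
    have hpa : p a < 0 := by
      rw [← hderivw a haIoo1, hadw, hw0]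
      apply div_neg_of_neg_of_pos
      · simpa using hcon
      · simpa using htIoo.1
    have hpb : 0 < p b := by
      rw [← hderivw b hbIoo1, hbdw, hw1]
      apply div_pos
      · simpa using hcon
      · linarith [htIoo.2]
    have hab : a ≤ b := le_of_lt (lt_trans haIoo.2 hbIoo.1)
    have := hganti haIoo1 hbIoo1 hab
    have hga : g a < 0 := mul_neg_of_pos_of_neg (Real.exp_pos _) hpa
    have hgb : 0 < g b := mul_pos (Real.exp_pos _) hpb
    simp only [hgdef] at this
    nlinarith [Real.exp_pos (μ*a), Real.exp_pos (μ*b)]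
  simp only [hwdef] at main
  linarith

set_option maxHeartbeats 1000000 in
/-- The analytic core of Theorem 1.3 (entropy bound along Schrödinger bridges):
if `h_f'' ≥ -λ h_f'` and `h_b'' ≥ λ h_b'` on `(0,1)`, then for every `t ∈ [0,1]`,
`h_f(t)+h_b(t)` is bounded by the stated combination of boundary values. -/
theorem entropy_bound_along_bridge
    (lam : ℝ) (hlam : 0 < lam) (hf hb : ℝ → ℝ)
    (hfc : ContinuousOn hf (Set.Icc 0 1))
    (hbc : ContinuousOn hb (Set.Icc 0 1))
    (hfd : ∀ t ∈ Set.Ioo (0:ℝ) 1, DifferentiableAt ℝ hf t)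
    (hfd2 : ∀ t ∈ Set.Ioo (0:ℝ) 1, DifferentiableAt ℝ (deriv hf) t)
    (hbd : ∀ t ∈ Set.Ioo (0:ℝ) 1, DifferentiableAt ℝ hb t)
    (hbd2 : ∀ t ∈ Set.Ioo (0:ℝ) 1, DifferentiableAt ℝ (deriv hb) t)
    (hfineq : ∀ t ∈ Set.Ioo (0:ℝ) 1, deriv (deriv hf) t ≥ -lam * deriv hf t)
    (hbineq : ∀ t ∈ Set.Ioo (0:ℝ) 1, deriv (deriv hb) t ≥ lam * deriv hb t) :
    ∀ t ∈ Set.Icc (0:ℝ) 1,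
      hf t + hb t ≤
        (hf 0 + hb 0) * (1 - Real.exp (-(lam * (1 - t)))) / (1 - Real.exp (-lam))
        + (hf 1 + hb 1) * (1 - Real.exp (-(lam * t))) / (1 - Real.exp (-lam))
        - (hf 0 + hb 1) *
            (Real.cosh (lam / 2) - Real.cosh (lam * (t - 1/2))) / Real.sinh (lam / 2) := by
  intro t ht
  have hF := key lam (ne_of_gt hlam) hf hfc hfd hfd2 hfineq t ht
  have hB := key (-lam) (neg_ne_zero.mpr (ne_of_gt hlam)) hb hbc hbd hbd2
    (fun s hs => by simpa using hbineq s hs) t ht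
  simp only [neg_neg, neg_mul] at hB
  -- now the algebraic identity for the coefficients
  set x := Real.exp (lam / 2) with hxdef
  set y := Real.exp (lam * t) with hydef
  have hx1 : 1 < x := by
    rw [hxdef]
    have : Real.exp 0 < Real.exp (lam/2) := Real.exp_lt_exp.mpr (by linarith)
    simpa using this
  have hy0 : 0 < y := Real.exp_pos _
  have hexplam : Real.exp lam = x^2 := by
    rw [hxdef, sq, ← Real.exp_add]; norm_num
  have hexpnl : Real.exp (-lam) = (x^2)⁻¹ := by rw [Real.exp_neg, hexplam]
  have hexpnt : Real.exp (-(lam * t)) = y⁻¹ := by rw [Real.exp_neg, hydef]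
  have hexpn1t : Real.exp (-(lam * (1 - t))) = y / x^2 := by
    have : -(lam * (1 - t)) = lam * t + -lam := by ring
    rw [this, Real.exp_add, hexpnl, ← hydef]; ring
  have hcosh2 : Real.cosh (lam / 2) = (x + x⁻¹) / 2 := by
    rw [Real.cosh_eq, ← hxdef, Real.exp_neg, ← hxdef]
  have hsinh2 : Real.sinh (lam / 2) = (x - x⁻¹) / 2 := by
    rw [Real.sinh_eq, ← hxdef, Real.exp_neg, ← hxdef]
  have hcosht : Real.cosh (lam * (t - 1/2)) = (y / x + x / y) / 2 := by
    rw [Real.cosh_eq]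
    rw [show lam * (t - 1/2) = lam * t + -(lam/2) by ring]
    rw [show -(lam * t + -(lam/2)) = lam/2 + -(lam * t) by ring]
    rw [Real.exp_add, Real.exp_add, Real.exp_neg, Real.exp_neg, ← hxdef, ← hydef]
    field_simp
  have hx0 : x ≠ 0 := by positivity
  have hxx : x^2 ≠ 1 := by nlinarith
  have hy0' : y ≠ 0 := ne_of_gt hy0
  have hden1 : 1 - Real.exp (-lam) ≠ 0 := by
    rw [hexpnl]
    intro h
    have : (x:ℝ)^2 = 1 := by field_simp at h; linarith
    exact hxx this
  have hsne : Real.sinh (lam / 2) ≠ 0 := by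
    rw [hsinh2]
    intro h
    have : x - x⁻¹ = 0 := by linarith
    have : x^2 = 1 := by field_simp at this; nlinarith
    exact hxx this
  have hden2 : 1 - Real.exp lam ≠ 0 := by
    rw [hexplam]
    intro h
    exact hxx (by linarith)
  have hidentity :
      (hf 0 + hb 0) * (1 - Real.exp (-(lam * (1 - t)))) / (1 - Real.exp (-lam))
        + (hf 1 + hb 1) * (1 - Real.exp (-(lam * t))) / (1 - Real.exp (-lam))
        - (hf 0 + hb 1) *
            (Real.cosh (lam / 2) - Real.cosh (lam * (t - 1/2))) / Real.sinh (lam / 2)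
      = (hf 0 * (1 - (1 - Real.exp (-(lam * t))) / (1 - Real.exp (-lam)))
          + hf 1 * ((1 - Real.exp (-(lam * t))) / (1 - Real.exp (-lam))))
        + (hb 0 * (1 - (1 - Real.exp (lam * t)) / (1 - Real.exp lam))
          + hb 1 * ((1 - Real.exp (lam * t)) / (1 - Real.exp lam))) := by
    have h1 : x - x⁻¹ ≠ 0 := by
      intro h
      apply hxx
      field_simp at h
      nlinarith
    have h2 : (1:ℝ) - (x^2)⁻¹ ≠ 0 := by
      intro h
      apply hxx
      have hx2 : (x:ℝ)^2 ≠ 0 := pow_ne_zero _ hx0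
      field_simp at h
      linarith
    have h3 : (1:ℝ) - x^2 ≠ 0 := fun h => hxx (by linarith)
    have h4 : x^2 - 1 ≠ 0 := sub_ne_zero.mpr hxx
    have hx2 : (x:ℝ)^2 ≠ 0 := pow_ne_zero _ hx0
    rw [hexpnl, hexpnt, hexpn1t, hcosh2, hsinh2, hcosht, hexplam, ← hydef]
    have e1 : (1 - y/x^2)/(1 - (x^2)⁻¹) = (x^2 - y)/(x^2 - 1) := by
      rw [div_eq_div_iff h2 h4]; field_simp
      try ring
    have e2 : (1 - y⁻¹)/(1 - (x^2)⁻¹) = x^2*(y-1)/(y*(x^2-1)) := by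
      rw [div_eq_div_iff h2 (mul_ne_zero hy0' h4)]; field_simp
      try ring
    have e3 : ((x + x⁻¹)/2 - (y/x + x/y)/2)/((x - x⁻¹)/2)
        = (x^2*y + y - y^2 - x^2)/(y*(x^2-1)) := by
      rw [div_eq_div_iff (div_ne_zero h1 two_ne_zero) (mul_ne_zero hy0' h4)]; field_simp
      try ring
    have e4 : (1 - y)/(1 - x^2) = (y - 1)/(x^2 - 1) := by
      rw [div_eq_div_iff h3 h4]; ring
    rw [mul_div_assoc, mul_div_assoc, mul_div_assoc, e1, e2, e3, e4]
    have hyd : y*(x^2-1) ≠ 0 := mul_ne_zero hy0' h4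
    field_simp
    ring
  rw [hidentity]
  linarith
end

section
/- Let λ > 0 and let h_f, h_b : [0,1] → ℝ be continuous on [0,1] and twice differentiable on (0,1), satisfying h_f''(t) ≥ −λ·h_f'(t) and h_b''(t) ≥ λ·h_b'(t) for all t ∈ (0,1). If moreover h_f(1/2) + h_b(1/2) ≥ 0, then h_f(0) + h_b(1) ≤ (1/(1 − exp(−λ/2)))·((h_f(0) + h_b(0)) + (h_f(1) + h_b(1))). -/
lemma key_shift (mu : ℝ) (h : ℝ → ℝ)
    (hc : ContinuousOn h (Set.Icc 0 1))
    (hd : ∀ t ∈ Set.Ioo (0:ℝ) 1, DifferentiableAt ℝ h t)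
    (hd2 : ∀ t ∈ Set.Ioo (0:ℝ) 1, DifferentiableAt ℝ (deriv h) t)
    (hineq : ∀ t ∈ Set.Ioo (0:ℝ) 1, deriv (deriv h) t ≥ -mu * deriv h t) :
    Real.exp (-(mu/2)) * (h (1/2) - h 0) ≤ h 1 - h (1/2) := by
  set θ := Real.exp (-(mu/2)) with hθ
  -- ψ t = exp (mu*t) * deriv h t is monotone on Ioo 0 1
  have hψmono : MonotoneOn (fun t => Real.exp (mu*t) * deriv h t) (Set.Ioo (0:ℝ) 1) := by
    have hder : ∀ t ∈ Set.Ioo (0:ℝ) 1, HasDerivAt (fun t => Real.exp (mu*t) * deriv h t)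
        (Real.exp (mu*t) * mu * deriv h t + Real.exp (mu*t) * deriv (deriv h) t) t := by
      intro t ht
      have e1 : HasDerivAt (fun t => Real.exp (mu*t)) (Real.exp (mu*t) * mu) t := by
        have := (Real.hasDerivAt_exp (mu*t)).comp t ((hasDerivAt_id t).const_mul mu)
        simpa [Function.comp_def] using this
      exact e1.mul (hd2 t ht).hasDerivAt
    apply monotoneOn_of_deriv_nonneg (convex_Ioo 0 1)
    · intro t ht
      exact ((hder t ht).differentiableAt.continuousAt).continuousWithinAt
    · rw [interior_Ioo]
      intro t ht
      exact (hder t ht).differentiableAt.differentiableWithinAt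
    · rw [interior_Ioo]
      intro t ht
      rw [(hder t ht).deriv]
      have := hineq t ht
      nlinarith [Real.exp_pos (mu*t)]
  -- hence θ * deriv h t ≤ deriv h (t+1/2) for t ∈ Ioo 0 (1/2)
  have hkey : ∀ t ∈ Set.Ioo (0:ℝ) (1/2), θ * deriv h t ≤ deriv h (t + 1/2) := by
    intro t ht
    obtain ⟨ht0, ht1⟩ := ht
    have m1 : t ∈ Set.Ioo (0:ℝ) 1 := ⟨ht0, by linarith⟩
    have m2 : t + 1/2 ∈ Set.Ioo (0:ℝ) 1 := ⟨by linarith, by linarith⟩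
    have := hψmono m1 m2 (by linarith)
    simp only at this
    have hexp : Real.exp (mu*(t+1/2)) = Real.exp (mu*t) * Real.exp (mu/2) := by
      rw [← Real.exp_add]; ring_nf
    rw [hexp] at this
    have h1 : deriv h t ≤ Real.exp (mu/2) * deriv h (t+1/2) := by
      have hp := Real.exp_pos (mu*t)
      nlinarith
    have h2 : θ * Real.exp (mu/2) = 1 := by
      rw [hθ, ← Real.exp_add]; ring_nf; exact Real.exp_zero
    have hθpos : 0 < θ := Real.exp_pos _
    calc θ * deriv h t ≤ θ * (Real.exp (mu/2) * deriv h (t+1/2)) := by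
          exact mul_le_mul_of_nonneg_left h1 hθpos.le
      _ = deriv h (t+1/2) := by rw [← mul_assoc, h2, one_mul]
  -- H t = h (t+1/2) - θ * h t is monotone on Icc 0 (1/2)
  have hHmono : MonotoneOn (fun t => h (t + 1/2) - θ * h t) (Set.Icc (0:ℝ) (1/2)) := by
    apply monotoneOn_of_deriv_nonneg (convex_Icc 0 (1/2))
    · apply ContinuousOn.sub
      · apply hc.comp (Continuous.continuousOn (by continuity))
        intro t ht
        exact ⟨by linarith [ht.1], by linarith [ht.2]⟩
      · exact continuousOn_const.mul (hc.mono (fun t ht => ⟨ht.1, by linarith [ht.2]⟩))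
    · rw [interior_Icc]
      intro t ht
      have m1 : t ∈ Set.Ioo (0:ℝ) 1 := ⟨ht.1, by linarith [ht.2]⟩
      have m2 : t + 1/2 ∈ Set.Ioo (0:ℝ) 1 := ⟨by linarith [ht.1], by linarith [ht.2]⟩
      have d1 : HasDerivAt (fun t => h (t + 1/2)) (deriv h (t+1/2)) t := by
        have := (hd _ m2).hasDerivAt.comp t ((hasDerivAt_id t).add_const (1/2:ℝ))
        simpa [Function.comp_def] using this
      exact (d1.sub ((hd t m1).hasDerivAt.const_mul θ)).differentiableAt.differentiableWithinAt
    · rw [interior_Icc]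
      intro t ht
      have m1 : t ∈ Set.Ioo (0:ℝ) 1 := ⟨ht.1, by linarith [ht.2]⟩
      have m2 : t + 1/2 ∈ Set.Ioo (0:ℝ) 1 := ⟨by linarith [ht.1], by linarith [ht.2]⟩
      have d1 : HasDerivAt (fun t => h (t + 1/2)) (deriv h (t+1/2)) t := by
        have := (hd _ m2).hasDerivAt.comp t ((hasDerivAt_id t).add_const (1/2:ℝ))
        simpa [Function.comp_def] using this
      rw [show (fun t => h (t + 1/2) - θ * h t) = (fun t => h (t + 1 / 2)) - fun y => θ * h y from rfl, (d1.sub ((hd t m1).hasDerivAt.const_mul θ)).deriv]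
      have := hkey t ht
      linarith
  have := hHmono (Set.mem_Icc.2 ⟨le_refl 0, by norm_num⟩)
      (Set.mem_Icc.2 ⟨by norm_num, le_refl (1/2:ℝ)⟩) (by norm_num)
  simp only at this
  norm_num at this
  linarith

/-- The analytic core of Corollary 1.4: the entropic transportation cost
`h_f(0)+h_b(1)` is bounded by `(H_U(μ)+H_U(ν))/(1-exp(-λ/2))`. -/
theorem entropic_cost_bound
    (lam : ℝ) (hlam : 0 < lam) (hf hb : ℝ → ℝ)
    (hfc : ContinuousOn hf (Set.Icc 0 1))
    (hbc : ContinuousOn hb (Set.Icc 0 1))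
    (hfd : ∀ t ∈ Set.Ioo (0:ℝ) 1, DifferentiableAt ℝ hf t)
    (hfd2 : ∀ t ∈ Set.Ioo (0:ℝ) 1, DifferentiableAt ℝ (deriv hf) t)
    (hbd : ∀ t ∈ Set.Ioo (0:ℝ) 1, DifferentiableAt ℝ hb t)
    (hbd2 : ∀ t ∈ Set.Ioo (0:ℝ) 1, DifferentiableAt ℝ (deriv hb) t)
    (hfineq : ∀ t ∈ Set.Ioo (0:ℝ) 1, deriv (deriv hf) t ≥ -lam * deriv hf t)
    (hbineq : ∀ t ∈ Set.Ioo (0:ℝ) 1, deriv (deriv hb) t ≥ lam * deriv hb t)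
    (hmid : hf (1/2) + hb (1/2) ≥ 0) :
    hf 0 + hb 1 ≤ (1 / (1 - Real.exp (-(lam / 2)))) * ((hf 0 + hb 0) + (hf 1 + hb 1)) := by
  set θ := Real.exp (-(lam/2)) with hθ
  have hF := key_shift lam hf hfc hfd hfd2 hfineq
  have hG := key_shift (-lam) hb hbc hbd hbd2 (by
    intro t ht; have := hbineq t ht; simp only [neg_neg]; linarith)
  have hθ1 : θ < 1 := by
    rw [hθ]
    have : -(lam/2) < 0 := by linarith
    calc Real.exp (-(lam/2)) < Real.exp 0 := Real.exp_lt_exp.2 this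
      _ = 1 := Real.exp_zero
  have hθpos : 0 < θ := Real.exp_pos _
  have hinv : θ * Real.exp (-(-lam/2)) = 1 := by
    rw [hθ, ← Real.exp_add]; ring_nf; exact Real.exp_zero
  have h1θ : 0 < 1 - θ := by linarith
  rw [show (1 / (1 - θ)) * ((hf 0 + hb 0) + (hf 1 + hb 1))
      = ((hf 0 + hb 0) + (hf 1 + hb 1)) / (1 - θ) by ring, le_div_iff₀ h1θ]
  -- hG : exp(lam/2) * (hb (1/2) - hb 0) ≤ hb 1 - hb (1/2), multiply by θ
  have hG' : θ * (Real.exp (-(-lam/2)) * (hb (1/2) - hb 0)) ≤ θ * (hb 1 - hb (1/2)) :=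
    mul_le_mul_of_nonneg_left hG hθpos.le
  rw [← mul_assoc, hinv, one_mul] at hG'
  nlinarith [mul_nonneg hθpos.le hmid]
end

section
/- Let λ > 0 and let h_f, h_b : [0,1] → ℝ be continuous on [0,1] and twice differentiable on (0,1), satisfying h_f''(t) ≥ −λ·h_f'(t) and h_b''(t) ≥ λ·h_b'(t) for all t ∈ (0,1). If moreover h_f(t) + h_b(t) ≥ 0 for all t ∈ [0,1] and h_f(1) + h_b(1) = 0, then h_f(0) + h_b(1) ≤ (h_f(0) + h_b(0))/(1 − exp(−λ)). -/
open Set Filter Topology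

lemma hasDerivAt_exp_mul' (c x : ℝ) :
    HasDerivAt (fun t => Real.exp (c * t)) (c * Real.exp (c * x)) x := by
  simpa [mul_comm, Function.comp_def] using (Real.hasDerivAt_exp (c * x)).comp x ((hasDerivAt_id x).const_mul c)

lemma exp_slope_pos' {c x y : ℝ} (hc : c ≠ 0) (hxy : x < y) :
    0 < (Real.exp (c * y) - Real.exp (c * x)) / c := by
  rcases hc.lt_or_gt with h | h
  · have h1 : c * y < c * x := by nlinarith
    exact div_pos_of_neg_of_neg (sub_neg.mpr (Real.exp_lt_exp.2 h1)) h
  · have h1 : c * x < c * y := by nlinarith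
    exact div_pos (sub_pos.2 (Real.exp_lt_exp.2 h1)) h

lemma mono_aux' (c : ℝ) (h : ℝ → ℝ)
    (hd2 : ∀ t ∈ Set.Ioo (0:ℝ) 1, DifferentiableAt ℝ (deriv h) t)
    (hineq : ∀ t ∈ Set.Ioo (0:ℝ) 1, deriv (deriv h) t ≥ c * deriv h t) :
    MonotoneOn (fun t => Real.exp (-c * t) * deriv h t) (Set.Ioo 0 1) := by
  have hw : ∀ x ∈ Set.Ioo (0:ℝ) 1, HasDerivAt (fun t => Real.exp (-c * t) * deriv h t)
      (-c * Real.exp (-c * x) * deriv h x + Real.exp (-c * x) * deriv (deriv h) x) x :=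
    fun x hx => (hasDerivAt_exp_mul' (-c) x).mul (hd2 x hx).hasDerivAt
  apply monotoneOn_of_deriv_nonneg (convex_Ioo 0 1)
  · exact fun x hx => ((hw x hx).differentiableAt.continuousAt).continuousWithinAt
  · rw [interior_Ioo]
    exact fun x hx => (hw x hx).differentiableAt.differentiableWithinAt
  · rw [interior_Ioo]
    intro x hx
    rw [(hw x hx).deriv]
    have h1 := hineq x hx
    have h2 := Real.exp_pos (-c * x)
    nlinarith [mul_le_mul_of_nonneg_left h1 h2.le]

lemma chord_aux' (c : ℝ) (hc : c ≠ 0) (h : ℝ → ℝ)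
    (hcont : ContinuousOn h (Set.Icc 0 1))
    (hd : ∀ t ∈ Set.Ioo (0:ℝ) 1, DifferentiableAt ℝ h t)
    (hmono : MonotoneOn (fun t => Real.exp (-c * t) * deriv h t) (Set.Ioo 0 1))
    {t : ℝ} (ht : t ∈ Set.Ioo (0:ℝ) 1) :
    h t * ((Real.exp c - 1) / c) ≤
      h 0 * ((Real.exp c - Real.exp (c * t)) / c) + h 1 * ((Real.exp (c * t) - 1) / c) := by
  obtain ⟨ht0, ht1⟩ := ht
  -- CMVT on [0, t]
  obtain ⟨x1, hx1, e1⟩ := exists_ratio_hasDerivAt_eq_ratio_slope h (deriv h) ht0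
    (hcont.mono (Set.Icc_subset_Icc le_rfl ht1.le))
    (fun x hx => (hd x ⟨hx.1, hx.2.trans ht1⟩).hasDerivAt)
    (fun s => Real.exp (c * s)) (fun s => c * Real.exp (c * s))
    (Real.continuous_exp.comp (continuous_const.mul continuous_id)).continuousOn
    (fun x _ => hasDerivAt_exp_mul' c x)
  -- CMVT on [t, 1]
  obtain ⟨x2, hx2, e2⟩ := exists_ratio_hasDerivAt_eq_ratio_slope h (deriv h) ht1
    (hcont.mono (Set.Icc_subset_Icc ht0.le le_rfl))
    (fun x hx => (hd x ⟨ht0.trans hx.1, hx.2⟩).hasDerivAt)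
    (fun s => Real.exp (c * s)) (fun s => c * Real.exp (c * s))
    (Real.continuous_exp.comp (continuous_const.mul continuous_id)).continuousOn
    (fun x _ => hasDerivAt_exp_mul' c x)
  have hx1m : x1 ∈ Set.Ioo (0:ℝ) 1 := ⟨hx1.1, hx1.2.trans ht1⟩
  have hx2m : x2 ∈ Set.Ioo (0:ℝ) 1 := ⟨ht0.trans hx2.1, hx2.2⟩
  have hwle : Real.exp (-c * x1) * deriv h x1 ≤ Real.exp (-c * x2) * deriv h x2 :=
    hmono hx1m hx2m (hx1.2.trans hx2.1).le
  have hB : 0 < (Real.exp (c * t) - 1) / c := by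
    simpa using exp_slope_pos' hc ht0 (x := 0)
  have hA : 0 < (Real.exp c - Real.exp (c * t)) / c := by
    simpa using exp_slope_pos' hc ht1 (y := 1)
  -- rewrite e1, e2 using w
  have hE1 : Real.exp (-c * x1) * Real.exp (c * x1) = 1 := by
    rw [← Real.exp_add]; ring_nf; exact Real.exp_zero
  have hE2 : Real.exp (-c * x2) * Real.exp (c * x2) = 1 := by
    rw [← Real.exp_add]; ring_nf; exact Real.exp_zero
  have e1' : (Real.exp (c * t) - 1) * deriv h x1 = (h t - h 0) * (c * Real.exp (c * x1)) := by
    simpa using e1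
  have e2' : (Real.exp c - Real.exp (c * t)) * deriv h x2 = (h 1 - h t) * (c * Real.exp (c * x2)) := by
    simpa using e2
  have f1 : h t - h 0 = ((Real.exp (c * t) - 1) / c) * (Real.exp (-c * x1) * deriv h x1) := by
    rw [div_mul_eq_mul_div, eq_div_iff hc]
    linear_combination (-Real.exp (-c * x1)) * e1' + (-(h t - h 0) * c) * hE1
  have f2 : h 1 - h t = ((Real.exp c - Real.exp (c * t)) / c) * (Real.exp (-c * x2) * deriv h x2) := by
    rw [div_mul_eq_mul_div, eq_div_iff hc]
    linear_combination (-Real.exp (-c * x2)) * e2' + (-(h 1 - h t) * c) * hE2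
  have key : (h t - h 0) * ((Real.exp c - Real.exp (c * t)) / c) ≤
      (h 1 - h t) * ((Real.exp (c * t) - 1) / c) := by
    rw [f1, f2]
    have h1 := mul_le_mul_of_nonneg_left hwle hB.le
    nlinarith [mul_le_mul_of_nonneg_right h1 hA.le]
  have hsum : (Real.exp c - 1) / c = (Real.exp c - Real.exp (c * t)) / c + (Real.exp (c * t) - 1) / c := by
    ring
  rw [hsum]
  nlinarith [key]

/-- The analytic core of Corollary 1.5: if moreover the entropy `h_f + h_b` is
nonnegative on `[0,1]` and vanishes at `t = 1`, then the entropic cost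
`h_f(0)+h_b(1)` is bounded by `H_U(μ)/(1-exp(-λ))`. -/
theorem entropic_cost_bound_invariant_measure
    (lam : ℝ) (hlam : 0 < lam) (hf hb : ℝ → ℝ)
    (hfc : ContinuousOn hf (Set.Icc 0 1))
    (hbc : ContinuousOn hb (Set.Icc 0 1))
    (hfd : ∀ t ∈ Set.Ioo (0:ℝ) 1, DifferentiableAt ℝ hf t)
    (hfd2 : ∀ t ∈ Set.Ioo (0:ℝ) 1, DifferentiableAt ℝ (deriv hf) t)
    (hbd : ∀ t ∈ Set.Ioo (0:ℝ) 1, DifferentiableAt ℝ hb t)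
    (hbd2 : ∀ t ∈ Set.Ioo (0:ℝ) 1, DifferentiableAt ℝ (deriv hb) t)
    (hfineq : ∀ t ∈ Set.Ioo (0:ℝ) 1, deriv (deriv hf) t ≥ -lam * deriv hf t)
    (hbineq : ∀ t ∈ Set.Ioo (0:ℝ) 1, deriv (deriv hb) t ≥ lam * deriv hb t)
    (hnonneg : ∀ t ∈ Set.Icc (0:ℝ) 1, hf t + hb t ≥ 0)
    (hend : hf 1 + hb 1 = 0) :
    hf 0 + hb 1 ≤ (hf 0 + hb 0) / (1 - Real.exp (-lam)) := by
  have hlamne : lam ≠ 0 := hlam.ne'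
  have hnlamne : -lam ≠ 0 := neg_ne_zero.mpr hlamne
  have ha1 : Real.exp (-lam) < 1 := by
    simpa using Real.exp_lt_exp.2 (neg_lt_zero.mpr hlam)
  have hb1' : 1 < Real.exp lam := by
    simpa using Real.exp_lt_exp.2 hlam
  have hab : Real.exp lam * Real.exp (-lam) = 1 := by
    rw [← Real.exp_add]; simp
  have hGpos : 0 < (Real.exp (-lam) - 1) / (-lam) :=
    div_pos_of_neg_of_neg (by linarith) (by linarith)
  have hKpos : 0 < (Real.exp lam - 1) / lam := div_pos (by linarith) hlam
  -- monotonicity of the exponentially weighted derivatives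
  have monof := mono_aux' (-lam) hf hfd2 hfineq
  have monob := mono_aux' lam hb hbd2 hbineq
  -- the auxiliary function Φ
  set Φ : ℝ → ℝ := fun s =>
    (hf 0 * ((Real.exp (-lam) - Real.exp (-lam * s)) / (-lam)) +
        hf 1 * ((Real.exp (-lam * s) - 1) / (-lam))) * ((Real.exp lam - 1) / lam) +
    (hb 0 * ((Real.exp lam - Real.exp (lam * s)) / lam) +
        hb 1 * ((Real.exp (lam * s) - 1) / lam)) * ((Real.exp (-lam) - 1) / (-lam)) with hΦdef
  have hΦpos : ∀ s ∈ Set.Ioo (0:ℝ) 1, 0 ≤ Φ s := by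
    intro s hs
    have c1 := chord_aux' (-lam) hnlamne hf hfc hfd monof hs
    have c2 := chord_aux' lam hlamne hb hbc hbd monob hs
    have h0 := hnonneg s (Set.Ioo_subset_Icc_self hs)
    simp only [hΦdef]
    nlinarith [mul_le_mul_of_nonneg_right c1 hKpos.le,
      mul_le_mul_of_nonneg_right c2 hGpos.le,
      mul_nonneg (mul_nonneg h0 hGpos.le) hKpos.le]
  have hΦ1 : Φ 1 = 0 := by
    simp only [hΦdef, mul_one]
    field_simp
    linear_combination (-((Real.exp (-lam) - 1) * (Real.exp lam - 1))) * hend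
  -- derivative of Φ at 1
  have hm : HasDerivAt (fun s => Real.exp (-lam * s)) (-lam * Real.exp (-lam * 1)) 1 :=
    hasDerivAt_exp_mul' (-lam) 1
  have hp : HasDerivAt (fun s => Real.exp (lam * s)) (lam * Real.exp (lam * 1)) 1 :=
    hasDerivAt_exp_mul' lam 1
  set Dval : ℝ := (hf 1 - hf 0) * Real.exp (-lam) * ((Real.exp lam - 1) / lam) +
      (hb 1 - hb 0) * Real.exp lam * ((Real.exp (-lam) - 1) / (-lam)) with hDdef
  have hPhi : HasDerivAt Φ Dval 1 := by
    have T1 := ((hm.const_sub (Real.exp (-lam))).div_const (-lam)).const_mul (hf 0)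
    have T2 := ((hm.sub_const 1).div_const (-lam)).const_mul (hf 1)
    have T3 := ((hp.const_sub (Real.exp lam)).div_const lam).const_mul (hb 0)
    have T4 := ((hp.sub_const 1).div_const lam).const_mul (hb 1)
    have H := ((T1.add T2).mul_const ((Real.exp lam - 1) / lam)).add
      ((T3.add T4).mul_const ((Real.exp (-lam) - 1) / (-lam)))
    refine H.congr_deriv ?_
    rw [hDdef]
    field_simp
    ring
  -- Dval ≤ 0 by taking the limit of slopes from the left
  have hne : (nhdsWithin (1:ℝ) (Set.Ioo (0:ℝ) 1)).NeBot := by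
    refine mem_closure_iff_nhdsWithin_neBot.mp ?_
    rw [closure_Ioo (zero_ne_one)]
    exact ⟨zero_le_one, le_rfl⟩
  have hten : Tendsto (slope Φ 1) (nhdsWithin (1:ℝ) (Set.Ioo (0:ℝ) 1)) (nhds Dval) :=
    (hasDerivAt_iff_tendsto_slope.mp hPhi).mono_left
      (nhdsWithin_mono 1 (fun x hx => ne_of_lt hx.2))
  have hDle : Dval ≤ 0 := by
    refine le_of_tendsto hten ?_
    filter_upwards [self_mem_nhdsWithin] with x hx
    rw [slope_def_field, hΦ1]
    exact div_nonpos_of_nonneg_of_nonpos (by linarith [hΦpos x hx]) (by linarith [hx.2])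
  -- conclude
  have heq : (hf 1 - hf 0) * Real.exp (-lam) * (Real.exp lam - 1) +
      (hb 1 - hb 0) * Real.exp lam * (1 - Real.exp (-lam)) = lam * Dval := by
    rw [hDdef]; field_simp; ring
  have H1 : (hf 1 - hf 0) * Real.exp (-lam) * (Real.exp lam - 1) +
      (hb 1 - hb 0) * Real.exp lam * (1 - Real.exp (-lam)) ≤ 0 := by
    rw [heq]
    exact mul_nonpos_of_nonneg_of_nonpos hlam.le hDle
  rw [le_div_iff₀ (by linarith : (0:ℝ) < 1 - Real.exp (-lam))]
  have keyeq : hf 0 * (1 - Real.exp (-lam)) + hb 0 * (Real.exp lam - 1) -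
      hb 1 * ((1 - Real.exp (-lam)) * (Real.exp lam - 1)) =
      -((hf 1 - hf 0) * Real.exp (-lam) * (Real.exp lam - 1) +
        (hb 1 - hb 0) * Real.exp lam * (1 - Real.exp (-lam))) +
      (hb 0 - hf 0 - hb 1) * (Real.exp lam * Real.exp (-lam) - 1) +
      Real.exp (-lam) * (Real.exp lam - 1) * (hf 1 + hb 1) := by ring
  have key2 : 0 ≤ hf 0 * (1 - Real.exp (-lam)) + hb 0 * (Real.exp lam - 1) -
      hb 1 * ((1 - Real.exp (-lam)) * (Real.exp lam - 1)) := by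
    rw [keyeq, hab, hend]
    simp only [sub_self, mul_zero, add_zero]
    linarith [H1]
  have fineq : ((hf 0 + hb 0) - (hf 0 + hb 1) * (1 - Real.exp (-lam))) * (Real.exp lam - 1) =
      (hf 0 * (1 - Real.exp (-lam)) + hb 0 * (Real.exp lam - 1) -
        hb 1 * ((1 - Real.exp (-lam)) * (Real.exp lam - 1))) +
      hf 0 * (Real.exp lam * Real.exp (-lam) - 1) := by ring
  have key3 : 0 ≤ ((hf 0 + hb 0) - (hf 0 + hb 1) * (1 - Real.exp (-lam))) * (Real.exp lam - 1) := by
    rw [fineq, hab]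
    simpa using key2
  nlinarith [key3, sub_pos.2 hb1']
end

section
/- Let λ > 0 and let φ : [0,1] → ℝ be continuous on [0,1] and twice differentiable on (0,1). If φ''(t) ≥ λ·φ'(t) for all t ∈ (0,1), then for all t ∈ [0,1]: φ(t) ≤ φ(1) + (φ(0) − φ(1))·(1 − exp(−λ(1−t)))/(1 − exp(−λ)). -/
/-- Lemma 5.1 (i) of the paper: comparison lemma for `φ'' ≥ λ φ'` with `λ > 0`. -/
theorem comparison_lemma_forward
    (lam : ℝ) (hlam : 0 < lam) (phi : ℝ → ℝ)
    (hc : ContinuousOn phi (Set.Icc 0 1))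
    (hd : ∀ t ∈ Set.Ioo (0:ℝ) 1, DifferentiableAt ℝ phi t)
    (hd2 : ∀ t ∈ Set.Ioo (0:ℝ) 1, DifferentiableAt ℝ (deriv phi) t)
    (hineq : ∀ t ∈ Set.Ioo (0:ℝ) 1, deriv (deriv phi) t ≥ lam * deriv phi t) :
    ∀ t ∈ Set.Icc (0:ℝ) 1,
      phi t ≤ phi 1 + (phi 0 - phi 1) *
        (1 - Real.exp (-(lam * (1 - t)))) / (1 - Real.exp (-lam)) := by
  have hden : 0 < 1 - Real.exp (-lam) := by
    have : Real.exp (-lam) < 1 := Real.exp_lt_one_iff.mpr (by linarith)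
    linarith
  set c : ℝ := (phi 0 - phi 1) / (1 - Real.exp (-lam)) with hc_def
  set E : ℝ → ℝ := fun t => Real.exp (-(lam * (1 - t))) with hE_def
  set g : ℝ → ℝ := fun t => phi 1 + c * (1 - E t) with hg_def
  set G1 : ℝ → ℝ := fun t => -(c * lam * E t) with hG1_def
  -- derivative of E
  have hEder : ∀ t : ℝ, HasDerivAt E (lam * E t) t := by
    intro t
    have h1 : HasDerivAt (fun s : ℝ => -(lam * (1 - s))) lam t := by
      have := (((hasDerivAt_const t (1:ℝ)).sub (hasDerivAt_id t)).const_mul lam).neg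
      simpa [Pi.neg_def, Pi.sub_def] using this
    have := h1.exp
    simpa [hE_def, mul_comm] using this
  have hgder : ∀ t : ℝ, HasDerivAt g (G1 t) t := by
    intro t
    have := ((hasDerivAt_const t (1:ℝ)).sub (hEder t)).const_mul c
    have := (hasDerivAt_const t (phi 1)).add this
    simpa [hg_def, hG1_def, Pi.add_def, Pi.sub_def] using this.congr_deriv
      (by ring : (0:ℝ) + c * (0 - lam * E t) = -(c * lam * E t))
  have hG1der : ∀ t : ℝ, HasDerivAt G1 (lam * G1 t) t := by
    intro t
    have := ((hEder t).const_mul (c * lam)).neg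
    simpa [hG1_def, Pi.neg_def] using this.congr_deriv (by ring)
  -- the monotone auxiliary function
  set u : ℝ → ℝ := fun t => Real.exp (-(lam * t)) * (deriv phi t - G1 t) with hu_def
  have hexpder : ∀ t : ℝ, HasDerivAt (fun s : ℝ => Real.exp (-(lam * s)))
      (-lam * Real.exp (-(lam * t))) t := by
    intro t
    have h1 : HasDerivAt (fun s : ℝ => -(lam * s)) (-lam) t := by
      simpa [Pi.neg_def] using ((hasDerivAt_id t).const_mul lam).neg
    simpa [mul_comm] using h1.exp
  have huder : ∀ t ∈ Set.Ioo (0:ℝ) 1, HasDerivAt u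
      (Real.exp (-(lam * t)) * (deriv (deriv phi) t - lam * deriv phi t)) t := by
    intro t ht
    have h1 : HasDerivAt (fun s => deriv phi s - G1 s)
        (deriv (deriv phi) t - lam * G1 t) t :=
      ((hd2 t ht).hasDerivAt).sub (hG1der t)
    have := (hexpder t).mul h1
    refine this.congr_deriv ?_
    ring
  have humono : MonotoneOn u (Set.Ioo (0:ℝ) 1) := by
    have hdiff : DifferentiableOn ℝ u (interior (Set.Ioo (0:ℝ) 1)) := by
      rw [interior_Ioo]
      intro x hx
      exact (huder x hx).differentiableAt.differentiableWithinAt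
    apply monotoneOn_of_deriv_nonneg (convex_Ioo 0 1) ?_ hdiff
    · intro x hx
      rw [interior_Ioo] at hx
      rw [(huder x hx).deriv]
      have h1 : 0 ≤ deriv (deriv phi) x - lam * deriv phi x := by
        have := hineq x hx; linarith
      positivity
    · intro x hx
      exact (huder x hx).differentiableAt.continuousAt.continuousWithinAt
  -- psi and its values at endpoints
  set psi : ℝ → ℝ := fun t => phi t - g t with hpsi_def
  have hpsi0 : psi 0 = 0 := by
    have : c * (1 - Real.exp (-lam)) = phi 0 - phi 1 :=
      div_mul_cancel₀ _ (ne_of_gt hden)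
    simp only [hpsi_def, hg_def, hE_def]
    norm_num
    linarith [this]
  have hpsi1 : psi 1 = 0 := by
    simp [hpsi_def, hg_def, hE_def]
  have hgcont : Continuous g := by
    apply continuous_const.add (continuous_const.mul _)
    exact continuous_const.sub ((continuous_const.mul (continuous_const.sub continuous_id)).neg.rexp)
  -- main claim: psi ≤ 0 on Icc
  have key : ∀ t ∈ Set.Icc (0:ℝ) 1, psi t ≤ 0 := by
    intro t ht
    rcases eq_or_lt_of_le ht.1 with h0 | h0
    · rw [← h0]; exact le_of_eq hpsi0
    rcases eq_or_lt_of_le ht.2 with h1 | h1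
    · rw [h1]; exact le_of_eq hpsi1
    by_contra hpos
    push_neg at hpos
    have htIoo : t ∈ Set.Ioo (0:ℝ) 1 := ⟨h0, h1⟩
    -- MVT on [0, t]
    obtain ⟨a, ha, hva⟩ := exists_hasDerivAt_eq_slope psi (fun x => deriv phi x - G1 x) h0
      ((hc.mono (Set.Icc_subset_Icc le_rfl (le_of_lt h1))).sub
        (hgcont.continuousOn))
      (fun x hx => ((hd x ⟨hx.1, lt_trans hx.2 h1⟩).hasDerivAt).sub
        (hgder x))
    -- MVT on [t, 1]
    obtain ⟨b, hb, hvb⟩ := exists_hasDerivAt_eq_slope psi (fun x => deriv phi x - G1 x) h1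
      ((hc.mono (Set.Icc_subset_Icc (le_of_lt h0) le_rfl)).sub
        (hgcont.continuousOn))
      (fun x hx => ((hd x ⟨lt_trans h0 hx.1, hx.2⟩).hasDerivAt).sub
        (hgder x))
    have hva' : 0 < deriv phi a - G1 a := by
      rw [hva, hpsi0]
      have : 0 < psi t / t := div_pos hpos h0
      simpa using this
    have hvb' : deriv phi b - G1 b < 0 := by
      rw [hvb, hpsi1]
      have h1t : 0 < 1 - t := by linarith
      have : (0 - psi t) / (1 - t) < 0 := div_neg_of_neg_of_pos (by linarith) h1t
      simpa using this
    have haIoo : a ∈ Set.Ioo (0:ℝ) 1 := ⟨ha.1, lt_trans ha.2 h1⟩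
    have hbIoo : b ∈ Set.Ioo (0:ℝ) 1 := ⟨lt_trans h0 hb.1, hb.2⟩
    have hab : a ≤ b := le_of_lt (lt_trans ha.2 hb.1)
    have hmono := humono haIoo hbIoo hab
    have hua : 0 < u a := by
      have := Real.exp_pos (-(lam * a))
      simp only [hu_def]
      positivity
    have hub : u b < 0 := by
      simp only [hu_def]
      exact mul_neg_of_pos_of_neg (Real.exp_pos _) hvb'
    linarith
  intro t ht
  have := key t ht
  have hrw : phi 1 + (phi 0 - phi 1) * (1 - Real.exp (-(lam * (1 - t)))) /
      (1 - Real.exp (-lam)) = g t := by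
    simp only [hg_def, hc_def, hE_def]
    ring
  rw [hrw]
  simpa [hpsi_def] using this
end

section
/- Let λ > 0 and let φ : [0,1] → ℝ be continuous on [0,1] and twice differentiable on (0,1). If φ''(t) ≥ −λ·φ'(t) for all t ∈ (0,1), then for all t ∈ [0,1]: φ(t) ≤ φ(0) + (φ(1) − φ(0))·(1 − exp(−λt))/(1 − exp(−λ)). -/
/-- Maximum principle: if `h'' ≥ -λ h'` on `(0,1)`, `h` continuous on `[0,1]`,
and `h ≤ 0` at the endpoints, then `h ≤ 0` on `[0,1]`. -/
lemma key_max_principle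
    (lam : ℝ) (hlam : 0 < lam) (h : ℝ → ℝ)
    (hc : ContinuousOn h (Set.Icc 0 1))
    (hd : ∀ t ∈ Set.Ioo (0:ℝ) 1, DifferentiableAt ℝ h t)
    (hd2 : ∀ t ∈ Set.Ioo (0:ℝ) 1, DifferentiableAt ℝ (deriv h) t)
    (hineq : ∀ t ∈ Set.Ioo (0:ℝ) 1, deriv (deriv h) t ≥ -lam * deriv h t)
    (h0 : h 0 ≤ 0) (h1 : h 1 ≤ 0) :
    ∀ t ∈ Set.Icc (0:ℝ) 1, h t ≤ 0 := by
  by_contra hcon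
  push_neg at hcon
  obtain ⟨t0, ht0, ht0pos⟩ := hcon
  obtain ⟨c, hcmem, hcmax⟩ := (isCompact_Icc (a := (0:ℝ)) (b := 1)).exists_isMaxOn
    (Set.nonempty_Icc.2 zero_le_one) hc
  have hcpos : 0 < h c := lt_of_lt_of_le ht0pos (hcmax ht0)
  have hcI : c ∈ Set.Ioo (0:ℝ) 1 := by
    rcases hcmem.1.lt_or_eq with h' | h'
    · rcases hcmem.2.lt_or_eq with h'' | h''
      · exact ⟨h', h''⟩
      · exact absurd (h'' ▸ hcpos) (not_lt.2 h1)
    · exact absurd (h' ▸ hcpos) (not_lt.2 h0)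
  -- deriv h c = 0
  have hderivc : deriv h c = 0 := by
    have : IsLocalMax h c :=
      hcmax.isLocalMax (Icc_mem_nhds hcI.1 hcI.2)
    exact this.deriv_eq_zero
  -- g = exp(λ t) * h' has nonneg derivative on Ioo 0 1
  set g : ℝ → ℝ := fun t => Real.exp (lam * t) * deriv h t with hg
  have hgd : ∀ t ∈ Set.Ioo (0:ℝ) 1, HasDerivAt g
      (Real.exp (lam * t) * (deriv (deriv h) t + lam * deriv h t)) t := by
    intro t ht
    have he : HasDerivAt (fun s => Real.exp (lam * s)) (lam * Real.exp (lam * t)) t := by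
      have h1 : HasDerivAt (fun s : ℝ => lam * s) lam t := by
        simpa using (hasDerivAt_id t).const_mul lam
      simpa [mul_comm, Function.comp_def] using (Real.hasDerivAt_exp (lam * t)).comp t h1
    have := he.mul ((hd2 t ht).hasDerivAt)
    refine this.congr_deriv ?_
    ring
  have hgmono : ∀ t ∈ Set.Ioo (0:ℝ) c, deriv h t ≤ 0 := by
    intro t ht
    have htI : t ∈ Set.Ioo (0:ℝ) 1 := ⟨ht.1, ht.2.trans hcI.2⟩
    have hsub : Set.Icc t c ⊆ Set.Ioo (0:ℝ) 1 := fun x hx =>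
      ⟨lt_of_lt_of_le ht.1 hx.1, lt_of_le_of_lt hx.2 hcI.2⟩
    have hmono : MonotoneOn g (Set.Icc t c) := by
      apply monotoneOn_of_deriv_nonneg (convex_Icc t c)
      · exact fun x hx => ((hgd x (hsub hx)).differentiableAt).continuousAt.continuousWithinAt
      · intro x hx
        rw [interior_Icc] at hx
        exact ((hgd x (hsub ⟨hx.1.le, hx.2.le⟩)).differentiableAt).differentiableWithinAt
      · intro x hx
        rw [interior_Icc] at hx
        have hxI : x ∈ Set.Ioo (0:ℝ) 1 := hsub ⟨hx.1.le, hx.2.le⟩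
        rw [(hgd x hxI).deriv]
        have : 0 ≤ deriv (deriv h) x + lam * deriv h x := by
          have := hineq x hxI; linarith
        positivity
    have : g t ≤ g c := hmono (Set.left_mem_Icc.2 ht.2.le) (Set.right_mem_Icc.2 ht.2.le) ht.2.le
    rw [hg] at this
    simp only [hderivc, mul_zero] at this
    nlinarith [Real.exp_pos (lam * t)]
  -- h antitone on [0, c]
  have hanti : AntitoneOn h (Set.Icc 0 c) := by
    apply antitoneOn_of_deriv_nonpos (convex_Icc 0 c)
    · exact hc.mono (Set.Icc_subset_Icc le_rfl hcI.2.le)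
    · intro x hx
      rw [interior_Icc] at hx
      exact (hd x ⟨hx.1, hx.2.trans hcI.2⟩).differentiableWithinAt
    · intro x hx
      rw [interior_Icc] at hx
      exact hgmono x hx
  have : h c ≤ h 0 :=
    hanti (Set.left_mem_Icc.2 hcI.1.le) (Set.right_mem_Icc.2 hcI.1.le) hcI.1.le
  linarith

/-- Lemma 5.1 (ii) of the paper: comparison lemma for `φ'' ≥ -λ φ'` with `λ > 0`. -/
theorem comparison_lemma_backward
    (lam : ℝ) (hlam : 0 < lam) (phi : ℝ → ℝ)
    (hc : ContinuousOn phi (Set.Icc 0 1))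
    (hd : ∀ t ∈ Set.Ioo (0:ℝ) 1, DifferentiableAt ℝ phi t)
    (hd2 : ∀ t ∈ Set.Ioo (0:ℝ) 1, DifferentiableAt ℝ (deriv phi) t)
    (hineq : ∀ t ∈ Set.Ioo (0:ℝ) 1, deriv (deriv phi) t ≥ -lam * deriv phi t) :
    ∀ t ∈ Set.Icc (0:ℝ) 1,
      phi t ≤ phi 0 + (phi 1 - phi 0) *
        (1 - Real.exp (-(lam * t))) / (1 - Real.exp (-lam)) := by
  have hden : 0 < 1 - Real.exp (-lam) := by
    have : Real.exp (-lam) < 1 := Real.exp_lt_one_iff.2 (by linarith)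
    linarith
  set C : ℝ := (phi 1 - phi 0) / (1 - Real.exp (-lam)) with hC
  set psi : ℝ → ℝ := fun t => phi 0 + C * (1 - Real.exp (-(lam * t))) with hpsi
  -- derivative of psi
  have hpsid : ∀ t : ℝ, HasDerivAt psi (C * lam * Real.exp (-(lam * t))) t := by
    intro t
    have h1 : HasDerivAt (fun s : ℝ => -(lam * s)) (-lam) t := by
      simpa [Pi.neg_def] using ((hasDerivAt_id t).const_mul lam).neg
    have h2 : HasDerivAt (fun s => Real.exp (-(lam * s)))
        (-lam * Real.exp (-(lam * t))) t := by
      simpa [mul_comm, Function.comp_def] using (Real.hasDerivAt_exp (-(lam * t))).comp t h1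
    have := ((h2.const_sub 1).const_mul C).const_add (phi 0)
    refine this.congr_deriv ?_
    ring
  have hpsid2 : ∀ t : ℝ, HasDerivAt (fun s => C * lam * Real.exp (-(lam * s)))
      (-(lam * (C * lam * Real.exp (-(lam * t))))) t := by
    intro t
    have h1 : HasDerivAt (fun s : ℝ => -(lam * s)) (-lam) t := by
      simpa [Pi.neg_def] using ((hasDerivAt_id t).const_mul lam).neg
    have h2 : HasDerivAt (fun s => Real.exp (-(lam * s)))
        (-lam * Real.exp (-(lam * t))) t := by
      simpa [mul_comm, Function.comp_def] using (Real.hasDerivAt_exp (-(lam * t))).comp t h1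
    have := h2.const_mul (C * lam)
    refine this.congr_deriv ?_
    ring
  set h : ℝ → ℝ := fun t => phi t - psi t with hh
  have hhd : ∀ t ∈ Set.Ioo (0:ℝ) 1, DifferentiableAt ℝ h t :=
    fun t ht => (hd t ht).sub (hpsid t).differentiableAt
  have hhderiv : ∀ t ∈ Set.Ioo (0:ℝ) 1,
      deriv h t = deriv phi t - C * lam * Real.exp (-(lam * t)) := by
    intro t ht
    rw [hh]
    rw [deriv_fun_sub (hd t ht) (hpsid t).differentiableAt, (hpsid t).deriv]
  have hhderivEq : Set.EqOn (deriv h)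
      (fun t => deriv phi t - C * lam * Real.exp (-(lam * t))) (Set.Ioo 0 1) :=
    fun t ht => hhderiv t ht
  have hopen : IsOpen (Set.Ioo (0:ℝ) 1) := isOpen_Ioo
  have hhd2 : ∀ t ∈ Set.Ioo (0:ℝ) 1,
      HasDerivAt (deriv h)
        (deriv (deriv phi) t + lam * (C * lam * Real.exp (-(lam * t)))) t := by
    intro t ht
    have heq : deriv h =ᶠ[nhds t]
        (fun s => deriv phi s - C * lam * Real.exp (-(lam * s))) :=
      Filter.eventuallyEq_of_mem (hopen.mem_nhds ht) hhderivEq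
    have h2 : HasDerivAt (fun s => deriv phi s - C * lam * Real.exp (-(lam * s)))
        (deriv (deriv phi) t + lam * (C * lam * Real.exp (-(lam * t)))) t := by
      have := (hd2 t ht).hasDerivAt.sub (hpsid2 t)
      refine this.congr_deriv ?_
      ring
    exact h2.congr_of_eventuallyEq heq
  -- apply the maximum principle
  have hmain : ∀ t ∈ Set.Icc (0:ℝ) 1, h t ≤ 0 := by
    apply key_max_principle lam hlam h
    · exact fun x hx => ((hc x hx).sub
        ((hpsid x).differentiableAt.continuousAt.continuousWithinAt))
    · exact hhd
    · exact fun t ht => (hhd2 t ht).differentiableAt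
    · intro t ht
      rw [(hhd2 t ht).deriv, hhderiv t ht]
      have := hineq t ht
      nlinarith [Real.exp_pos (-(lam * t))]
    · simp [hh, hpsi]
    · have : psi 1 = phi 1 := by
        rw [hpsi, hC]
        field_simp
        ring
      simp [hh, this]
  intro t ht
  have := hmain t ht
  rw [hh, hpsi, hC] at this
  have htarget : phi 0 + (phi 1 - phi 0) / (1 - Real.exp (-lam)) *
      (1 - Real.exp (-(lam * t))) =
      phi 0 + (phi 1 - phi 0) * (1 - Real.exp (-(lam * t))) / (1 - Real.exp (-lam)) := by
    ring
  linarith [this, htarget.symm.le]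
end

section
/- Let V : ℝ^d → ℝ be smooth, and let f̃, g̃ : (0,1) × ℝ^d → ℝ be smooth and everywhere positive, satisfying ∂_t f̃ = (1/2)Δf̃ − V·f̃ and ∂_t g̃ = −(1/2)Δg̃ + V·g̃. Set μ := f̃·g̃ and v := (1/2)∇(log g̃ − log f̃). Then at every point of (0,1) × ℝ^d: ∂_t v + (1/2)∇|v|² = −(1/4)∇(Δ log μ) − (1/8)∇(|∇ log μ|²) + ∇V. -/
noncomputable section

/-- Partial derivative in the `i`-th coordinate direction. -/
def pd {d : ℕ} (i : Fin d) (f : (Fin d → ℝ) → ℝ) (x : Fin d → ℝ) : ℝ :=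
  fderiv ℝ f x (Pi.single i 1)

/-- Spatial gradient. -/
def grad {d : ℕ} (f : (Fin d → ℝ) → ℝ) (x : Fin d → ℝ) : Fin d → ℝ :=
  fun i => pd i f x

/-- Spatial Laplacian. -/
def lap {d : ℕ} (f : (Fin d → ℝ) → ℝ) (x : Fin d → ℝ) : ℝ :=
  ∑ i, pd i (pd i f) x

section helpers

variable {d : ℕ} {f g : (Fin d → ℝ) → ℝ} {x : Fin d → ℝ} {i : Fin d}

lemma HasFDerivAt.pd_eq {f' : (Fin d → ℝ) →L[ℝ] ℝ} (h : HasFDerivAt f f' x) :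
    pd i f x = f' (Pi.single i 1) := by rw [pd, h.fderiv]

lemma pd_add (hf : DifferentiableAt ℝ f x) (hg : DifferentiableAt ℝ g x) :
    pd i (fun y => f y + g y) x = pd i f x + pd i g x := by
  rw [HasFDerivAt.pd_eq (f := fun y => f y + g y) (hf.hasFDerivAt.add hg.hasFDerivAt)]; simp [pd]

lemma pd_sub (hf : DifferentiableAt ℝ f x) (hg : DifferentiableAt ℝ g x) :
    pd i (fun y => f y - g y) x = pd i f x - pd i g x := by
  rw [HasFDerivAt.pd_eq (f := fun y => f y - g y) (hf.hasFDerivAt.sub hg.hasFDerivAt)]; simp [pd]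

lemma pd_log (hf : DifferentiableAt ℝ f x) (hx : f x ≠ 0) :
    pd i (fun y => Real.log (f y)) x = pd i f x / f x := by
  rw [(hf.hasFDerivAt.log hx).pd_eq]; simp [pd]; ring

lemma pd_div (hf : DifferentiableAt ℝ f x) (hg : DifferentiableAt ℝ g x) (hx : g x ≠ 0) :
    pd i (fun y => f y / g y) x = (pd i f x * g x - f x * pd i g x) / (g x)^2 := by
  have hinv : HasFDerivAt (fun y => (g y)⁻¹) ((-((g x)^2)⁻¹) • fderiv ℝ g x) x :=
    (hasDerivAt_inv hx).comp_hasFDerivAt x hg.hasFDerivAt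
  have hmul := hf.hasFDerivAt.mul hinv
  have h0 : pd i (fun y => f y / g y) x = pd i (fun y => f y * (g y)⁻¹) x := by
    simp [div_eq_mul_inv]
  rw [h0, HasFDerivAt.pd_eq (f := fun y => f y * (g y)⁻¹) hmul]
  simp [pd]
  field_simp
  ring

lemma pd_comb3 (i : Fin d) (x : Fin d → ℝ) (c1 c2 c3 : ℝ) {f1 f2 f3 : (Fin d → ℝ) → ℝ}
    (h1 : DifferentiableAt ℝ f1 x) (h2 : DifferentiableAt ℝ f2 x)
    (h3 : DifferentiableAt ℝ f3 x) :
    pd i (fun y => c1 * f1 y + c2 * f2 y + c3 * f3 y) x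
      = c1 * pd i f1 x + c2 * pd i f2 x + c3 * pd i f3 x := by
  rw [HasFDerivAt.pd_eq (f := fun y => c1 * f1 y + c2 * f2 y + c3 * f3 y)
    (((h1.hasFDerivAt.const_mul c1).add (h2.hasFDerivAt.const_mul c2)).add
    (h3.hasFDerivAt.const_mul c3))]
  simp [pd]

lemma pd_comb5 (i : Fin d) (x : Fin d → ℝ) (c1 c2 c3 c4 c5 : ℝ)
    {f1 f2 f3 f4 f5 : (Fin d → ℝ) → ℝ}
    (h1 : DifferentiableAt ℝ f1 x) (h2 : DifferentiableAt ℝ f2 x)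
    (h3 : DifferentiableAt ℝ f3 x) (h4 : DifferentiableAt ℝ f4 x)
    (h5 : DifferentiableAt ℝ f5 x) :
    pd i (fun y => c1 * f1 y + c2 * f2 y + c3 * f3 y + c4 * f4 y + c5 * f5 y) x
      = c1 * pd i f1 x + c2 * pd i f2 x + c3 * pd i f3 x + c4 * pd i f4 x + c5 * pd i f5 x := by
  rw [HasFDerivAt.pd_eq (f := fun y => c1 * f1 y + c2 * f2 y + c3 * f3 y + c4 * f4 y + c5 * f5 y)
    ((((((h1.hasFDerivAt.const_mul c1).add (h2.hasFDerivAt.const_mul c2)).add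
    (h3.hasFDerivAt.const_mul c3)).add (h4.hasFDerivAt.const_mul c4)).add
    (h5.hasFDerivAt.const_mul c5)))]
  simp [pd]

lemma contDiffAt_fderiv_apply {X : Type*} [NormedAddCommGroup X] [NormedSpace ℝ X]
    {u : X → ℝ} {p : X} (hu : ContDiffAt ℝ (⊤:ℕ∞) u p) (v : X) :
    ContDiffAt ℝ (⊤:ℕ∞) (fun q => fderiv ℝ u q v) p := by
  have h1 : ContDiffAt ℝ (⊤:ℕ∞) (fderiv ℝ u) p := hu.fderiv_right (by simp)
  exact ((ContinuousLinearMap.apply ℝ ℝ v).contDiff.contDiffAt).comp p h1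

lemma contDiff_pd (i : Fin d) (hf : ContDiff ℝ (⊤:ℕ∞) f) :
    ContDiff ℝ (⊤:ℕ∞) (pd i f) := by
  have h1 : ContDiff ℝ (⊤:ℕ∞) (fderiv ℝ f) := hf.fderiv_right (by simp)
  exact ((ContinuousLinearMap.apply ℝ ℝ (Pi.single i 1)).contDiff).comp h1

lemma contDiff_lap (hf : ContDiff ℝ (⊤:ℕ∞) f) : ContDiff ℝ (⊤:ℕ∞) (lap f) := by
  have : ContDiff ℝ (⊤:ℕ∞) (fun x => ∑ j, pd j (pd j f) x) :=
    ContDiff.sum fun j _ => contDiff_pd j (contDiff_pd j hf)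
  exact this

lemma lap_add (hf : ContDiff ℝ (⊤:ℕ∞) f) (hg : ContDiff ℝ (⊤:ℕ∞) g) (x : Fin d → ℝ) :
    lap (fun z => f z + g z) x = lap f x + lap g x := by
  have h1 : ∀ j : Fin d, pd j (fun z => f z + g z) = fun y => pd j f y + pd j g y :=
    fun j => funext fun y =>
      pd_add (hf.differentiable (by norm_cast) y) (hg.differentiable (by norm_cast) y)
  simp only [lap]
  rw [← Finset.sum_add_distrib]
  refine Finset.sum_congr rfl fun j _ => ?_
  rw [h1 j]
  exact pd_add ((contDiff_pd j hf).differentiable (by norm_cast) x)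
    ((contDiff_pd j hg).differentiable (by norm_cast) x)

lemma lap_eq_of_pos (hf : ContDiff ℝ (⊤:ℕ∞) f) (hpos : ∀ y, 0 < f y) (x : Fin d → ℝ) :
    lap f x = (lap (fun z => Real.log (f z)) x
      + ∑ j, (pd j (fun z => Real.log (f z)) x)^2) * f x := by
  have hd : Differentiable ℝ f := hf.differentiable (by norm_cast)
  have hpdlog : ∀ j : Fin d, pd j (fun z => Real.log (f z)) = fun y => pd j f y / f y :=
    fun j => funext fun y => pd_log (hd y) (hpos y).ne'
  have hkey : ∀ (j : Fin d) (y : Fin d → ℝ), pd j (pd j (fun z => Real.log (f z))) y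
      = (pd j (pd j f) y * f y - pd j f y * pd j f y) / (f y)^2 := by
    intro j y
    rw [hpdlog j]
    exact pd_div ((contDiff_pd j hf).differentiable (by norm_cast) y) (hd y) (hpos y).ne'
  have h1 : ∑ j, pd j (pd j (fun z => Real.log (f z))) x
      = ∑ j, (pd j (pd j f) x * f x - pd j f x * pd j f x) / (f x)^2 :=
    Finset.sum_congr rfl fun j _ => hkey j x
  have h2 : ∑ j, (pd j (fun z => Real.log (f z)) x)^2 = ∑ j, (pd j f x / f x)^2 :=
    Finset.sum_congr rfl fun j _ => by rw [hpdlog j]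
  simp only [lap]
  rw [h1, h2, ← Finset.sum_add_distrib, Finset.sum_mul]
  refine Finset.sum_congr rfl fun j _ => ?_
  have h0 : f x ≠ 0 := (hpos x).ne'
  field_simp
  ring

lemma deriv_slice {u : ℝ × (Fin d → ℝ) → ℝ} {t : ℝ} {x : Fin d → ℝ}
    (hu : DifferentiableAt ℝ u (t, x)) :
    deriv (fun s => u (s, x)) t = fderiv ℝ u (t, x) (1, 0) := by
  have h1 : HasDerivAt (fun s : ℝ => ((s, x) : ℝ × (Fin d → ℝ))) (1, 0) t :=
    (hasDerivAt_id t).prodMk (hasDerivAt_const t x)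
  exact (hu.hasFDerivAt.comp_hasDerivAt t h1).deriv

lemma pd_slice {u : ℝ × (Fin d → ℝ) → ℝ} {t : ℝ} {x : Fin d → ℝ} (i : Fin d)
    (hu : DifferentiableAt ℝ u (t, x)) :
    pd i (fun y => u (t, y)) x = fderiv ℝ u (t, x) (0, Pi.single i 1) := by
  have h1 : HasFDerivAt (fun y : Fin d → ℝ => ((t, y) : ℝ × (Fin d → ℝ)))
      ((0 : (Fin d → ℝ) →L[ℝ] ℝ).prod (ContinuousLinearMap.id ℝ (Fin d → ℝ))) x :=
    (hasFDerivAt_const t x).prodMk (hasFDerivAt_id x)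
  have h2 : HasFDerivAt (fun y => u (t, y))
      ((fderiv ℝ u (t, x)).comp
        ((0 : (Fin d → ℝ) →L[ℝ] ℝ).prod (ContinuousLinearMap.id ℝ (Fin d → ℝ)))) x :=
    hu.hasFDerivAt.comp x h1
  rw [pd, h2.fderiv]
  simp

lemma fderiv_swap {u : ℝ × (Fin d → ℝ) → ℝ} {p : ℝ × (Fin d → ℝ)}
    (hu : ContDiffAt ℝ (⊤:ℕ∞) u p) (w w' : ℝ × (Fin d → ℝ)) :
    fderiv ℝ (fun q => fderiv ℝ u q w) p w' = fderiv ℝ (fun q => fderiv ℝ u q w') p w := by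
  have h2 : ContDiffAt ℝ 1 (fderiv ℝ u) p := hu.fderiv_right (by norm_cast)
  have h2' : DifferentiableAt ℝ (fderiv ℝ u) p := h2.differentiableAt one_ne_zero
  have key : ∀ v v' : ℝ × (Fin d → ℝ),
      fderiv ℝ (fun q => fderiv ℝ u q v) p v' = fderiv ℝ (fderiv ℝ u) p v' v := by
    intro v v'
    have h3 : HasFDerivAt (fun q => fderiv ℝ u q v)
        ((ContinuousLinearMap.apply ℝ ℝ v).comp (fderiv ℝ (fderiv ℝ u) p)) p :=
      (ContinuousLinearMap.apply ℝ ℝ v).hasFDerivAt.comp p h2'.hasFDerivAt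
    rw [h3.fderiv]; rfl
  rw [key w w', key w' w]
  exact (hu.isSymmSndFDerivAt (by rw [minSmoothness_of_isRCLikeNormedField]; exact WithTop.coe_le_coe.mpr (le_top : (2:ℕ∞) ≤ ⊤))).eq w' w

end helpers

/-- Theorem 1.1/1.2/1.7 (pointwise computational core): if `f̃, g̃ > 0` solve the
forward/backward Feynman–Kac equations with potential `V`, `μ := f̃ g̃` and
`v := (1/2)∇(log g̃ - log f̃)`, then
`∂ₜ v + (1/2)∇|v|² = -(1/4)∇(Δ log μ) - (1/8)∇(|∇ log μ|²) + ∇V`. -/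
theorem newton_equation_bridge
    (d : ℕ) (hd : 1 ≤ d)
    (V : (Fin d → ℝ) → ℝ) (hV : ContDiff ℝ (⊤ : ℕ∞) V)
    (F G : ℝ → (Fin d → ℝ) → ℝ)
    (hF : ContDiffOn ℝ (⊤ : ℕ∞) (fun p : ℝ × (Fin d → ℝ) => F p.1 p.2)
      (Set.Ioo 0 1 ×ˢ Set.univ))
    (hG : ContDiffOn ℝ (⊤ : ℕ∞) (fun p : ℝ × (Fin d → ℝ) => G p.1 p.2)
      (Set.Ioo 0 1 ×ˢ Set.univ))
    (hFpos : ∀ t ∈ Set.Ioo (0:ℝ) 1, ∀ x, 0 < F t x)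
    (hGpos : ∀ t ∈ Set.Ioo (0:ℝ) 1, ∀ x, 0 < G t x)
    (heF : ∀ t ∈ Set.Ioo (0:ℝ) 1, ∀ x,
      deriv (fun s => F s x) t = (1/2) * lap (F t) x - V x * F t x)
    (heG : ∀ t ∈ Set.Ioo (0:ℝ) 1, ∀ x,
      deriv (fun s => G s x) t = -(1/2) * lap (G t) x + V x * G t x) :
    ∀ t ∈ Set.Ioo (0:ℝ) 1, ∀ x, ∀ i : Fin d,
      deriv (fun s => (1/2) * grad (fun z => Real.log (G s z) - Real.log (F s z)) x i) t
        + (1/2) * grad (fun y =>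
            ∑ j, ((1/2) * grad (fun z => Real.log (G t z) - Real.log (F t z)) y j)^2) x i
      = -(1/4) * grad (fun y => lap (fun z => Real.log (F t z * G t z)) y) x i
        - (1/8) * grad (fun y =>
            ∑ j, (grad (fun z => Real.log (F t z * G t z)) y j)^2) x i
        + grad V x i := by
  intro t ht x i
  simp only [grad]
  have hUo : IsOpen (Set.Ioo (0:ℝ) 1 ×ˢ (Set.univ : Set (Fin d → ℝ))) :=
    isOpen_Ioo.prod isOpen_univ
  have hmem : ∀ s ∈ Set.Ioo (0:ℝ) 1, ∀ y : Fin d → ℝ,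
      ((s, y) : ℝ × (Fin d → ℝ)) ∈ Set.Ioo (0:ℝ) 1 ×ˢ (Set.univ : Set (Fin d → ℝ)) :=
    fun s hs y => ⟨hs, trivial⟩
  have hFt : ∀ s ∈ Set.Ioo (0:ℝ) 1, ContDiff ℝ (⊤:ℕ∞) (F s) := by
    intro s hs
    have hcurve : ContDiff ℝ (⊤:ℕ∞) (fun y : Fin d → ℝ => ((s, y) : ℝ × (Fin d → ℝ))) :=
      contDiff_const.prodMk contDiff_id
    have h1 : ContDiffOn ℝ (⊤:ℕ∞) ((fun p : ℝ × (Fin d → ℝ) => F p.1 p.2) ∘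
        (fun y : Fin d → ℝ => ((s, y) : ℝ × (Fin d → ℝ)))) Set.univ :=
      hF.comp hcurve.contDiffOn (fun y _ => hmem s hs y)
    rw [contDiffOn_univ] at h1
    exact h1
  have hGt : ∀ s ∈ Set.Ioo (0:ℝ) 1, ContDiff ℝ (⊤:ℕ∞) (G s) := by
    intro s hs
    have hcurve : ContDiff ℝ (⊤:ℕ∞) (fun y : Fin d → ℝ => ((s, y) : ℝ × (Fin d → ℝ))) :=
      contDiff_const.prodMk contDiff_id
    have h1 : ContDiffOn ℝ (⊤:ℕ∞) ((fun p : ℝ × (Fin d → ℝ) => G p.1 p.2) ∘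
        (fun y : Fin d → ℝ => ((s, y) : ℝ × (Fin d → ℝ)))) Set.univ :=
      hG.comp hcurve.contDiffOn (fun y _ => hmem s hs y)
    rw [contDiffOn_univ] at h1
    exact h1
  have ha : ContDiff ℝ (⊤:ℕ∞) (fun z => Real.log (F t z)) :=
    (hFt t ht).log fun z => (hFpos t ht z).ne'
  have hb : ContDiff ℝ (⊤:ℕ∞) (fun z => Real.log (G t z)) :=
    (hGt t ht).log fun z => (hGpos t ht z).ne'
  have hdLa : DifferentiableAt ℝ (lap (fun z => Real.log (F t z))) x :=
    (contDiff_lap ha).differentiable (by norm_cast) x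
  have hdLb : DifferentiableAt ℝ (lap (fun z => Real.log (G t z))) x :=
    (contDiff_lap hb).differentiable (by norm_cast) x
  have hdSa : DifferentiableAt ℝ (fun y => ∑ j, (pd j (fun z => Real.log (F t z)) y)^2) x :=
    (ContDiff.sum fun j _ => (contDiff_pd j ha).pow 2).differentiable (by norm_cast) x
  have hdSb : DifferentiableAt ℝ (fun y => ∑ j, (pd j (fun z => Real.log (G t z)) y)^2) x :=
    (ContDiff.sum fun j _ => (contDiff_pd j hb).pow 2).differentiable (by norm_cast) x
  have hdSab : DifferentiableAt ℝ (fun y => ∑ j,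
      pd j (fun z => Real.log (F t z)) y * pd j (fun z => Real.log (G t z)) y) x :=
    (ContDiff.sum fun j _ => (contDiff_pd j ha).mul (contDiff_pd j hb)).differentiable
      (by norm_cast) x
  have hdV : DifferentiableAt ℝ V x := hV.differentiable (by norm_cast) x
  have hwc : ∀ s ∈ Set.Ioo (0:ℝ) 1, ∀ y, ContDiffAt ℝ (⊤:ℕ∞)
      (fun p : ℝ × (Fin d → ℝ) => Real.log (G p.1 p.2) - Real.log (F p.1 p.2)) (s, y) := by
    intro s hs y
    have h1 := (hG.contDiffAt (hUo.mem_nhds (hmem s hs y))).log (hGpos s hs y).ne'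
    have h2 := (hF.contDiffAt (hUo.mem_nhds (hmem s hs y))).log (hFpos s hs y).ne'
    exact h1.sub h2
  set Dw01 : ℝ × (Fin d → ℝ) → ℝ := fun q => fderiv ℝ
    (fun p : ℝ × (Fin d → ℝ) => Real.log (G p.1 p.2) - Real.log (F p.1 p.2)) q
    (0, Pi.single i 1) with hDw01def
  set Dw10 : ℝ × (Fin d → ℝ) → ℝ := fun q => fderiv ℝ
    (fun p : ℝ × (Fin d → ℝ) => Real.log (G p.1 p.2) - Real.log (F p.1 p.2)) q
    ((1:ℝ), (0 : Fin d → ℝ)) with hDw10def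
  have hcDw01 : ∀ s ∈ Set.Ioo (0:ℝ) 1, ∀ y, ContDiffAt ℝ (⊤:ℕ∞) Dw01 (s, y) :=
    fun s hs y => contDiffAt_fderiv_apply (hwc s hs y) _
  have hcDw10 : ∀ s ∈ Set.Ioo (0:ℝ) 1, ∀ y, ContDiffAt ℝ (⊤:ℕ∞) Dw10 (s, y) :=
    fun s hs y => contDiffAt_fderiv_apply (hwc s hs y) _
  have hT1 : deriv (fun s => 1 / 2 * pd i (fun z => Real.log (G s z) - Real.log (F s z)) x) t
      = 1 / 2 * pd i (fun y => Dw10 (t, y)) x := by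
    have hev : (fun s => 1 / 2 * pd i (fun z => Real.log (G s z) - Real.log (F s z)) x)
        =ᶠ[nhds t] (fun s => 1 / 2 * Dw01 (s, x)) := by
      filter_upwards [Ioo_mem_nhds ht.1 ht.2] with s hs
      have h1 := pd_slice (u := fun p : ℝ × (Fin d → ℝ) =>
        Real.log (G p.1 p.2) - Real.log (F p.1 p.2)) i
        ((hwc s hs x).differentiableAt (by norm_cast))
      exact congrArg (fun r => 1 / 2 * r) h1
    rw [hev.deriv_eq]
    have hd1 : DifferentiableAt ℝ (fun s => Dw01 (s, x)) t := by
      have h2 : DifferentiableAt ℝ Dw01 (t, x) :=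
        (hcDw01 t ht x).differentiableAt (by norm_cast)
      exact h2.comp t (by fun_prop : DifferentiableAt ℝ (fun s : ℝ => ((s, x) : ℝ × (Fin d → ℝ))) t)
    rw [deriv_const_mul _ hd1]
    congr 1
    rw [deriv_slice ((hcDw01 t ht x).differentiableAt (by norm_cast))]
    rw [pd_slice i ((hcDw10 t ht x).differentiableAt (by norm_cast))]
    exact fderiv_swap (hwc t ht x) _ _
  have hDt : (fun y => Dw10 (t, y)) = (fun y =>
      -(1/2) * lap (fun z => Real.log (G t z)) y
      + -(1/2) * (∑ j, (pd j (fun z => Real.log (G t z)) y)^2)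
      + -(1/2) * lap (fun z => Real.log (F t z)) y
      + -(1/2) * (∑ j, (pd j (fun z => Real.log (F t z)) y)^2)
      + 2 * V y) := by
    funext y
    have h1 : Dw10 (t, y) = deriv (fun s => Real.log (G s y) - Real.log (F s y)) t :=
      (deriv_slice ((hwc t ht y).differentiableAt (by norm_cast))).symm
    rw [h1]
    have hdF : DifferentiableAt ℝ (fun s => F s y) t := by
      have h2 : DifferentiableAt ℝ (fun p : ℝ × (Fin d → ℝ) => F p.1 p.2) (t, y) :=
        (hF.contDiffAt (hUo.mem_nhds (hmem t ht y))).differentiableAt (by norm_cast)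
      exact h2.comp t (by fun_prop : DifferentiableAt ℝ (fun s : ℝ => ((s, y) : ℝ × (Fin d → ℝ))) t)
    have hdG : DifferentiableAt ℝ (fun s => G s y) t := by
      have h2 : DifferentiableAt ℝ (fun p : ℝ × (Fin d → ℝ) => G p.1 p.2) (t, y) :=
        (hG.contDiffAt (hUo.mem_nhds (hmem t ht y))).differentiableAt (by norm_cast)
      exact h2.comp t (by fun_prop : DifferentiableAt ℝ (fun s : ℝ => ((s, y) : ℝ × (Fin d → ℝ))) t)
    have hF' := hdF.hasDerivAt.log (hFpos t ht y).ne'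
    have hG' := hdG.hasDerivAt.log (hGpos t ht y).ne'
    have h3 : deriv (fun s => Real.log (G s y) - Real.log (F s y)) t
        = deriv (fun s => G s y) t / G t y - deriv (fun s => F s y) t / F t y :=
      (hG'.sub hF').deriv
    rw [h3, heG t ht y, heF t ht y,
        lap_eq_of_pos (hGt t ht) (hGpos t ht) y, lap_eq_of_pos (hFt t ht) (hFpos t ht) y]
    have h4 : F t y ≠ 0 := (hFpos t ht y).ne'
    have h5 : G t y ≠ 0 := (hGpos t ht y).ne'
    field_simp
    ring
  have hsubpd : ∀ (j : Fin d) (y : Fin d → ℝ),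
      pd j (fun z => Real.log (G t z) - Real.log (F t z)) y
        = pd j (fun z => Real.log (G t z)) y - pd j (fun z => Real.log (F t z)) y :=
    fun j y => pd_sub (hb.differentiable (by norm_cast) y) (ha.differentiable (by norm_cast) y)
  have haddpd : ∀ (j : Fin d) (y : Fin d → ℝ),
      pd j (fun z => Real.log (F t z) + Real.log (G t z)) y
        = pd j (fun z => Real.log (F t z)) y + pd j (fun z => Real.log (G t z)) y :=
    fun j y => pd_add (ha.differentiable (by norm_cast) y) (hb.differentiable (by norm_cast) y)
  have hB : (fun y => ∑ j, (1 / 2 * pd j (fun z => Real.log (G t z) - Real.log (F t z)) y)^2)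
      = (fun y => (1/4) * (∑ j, (pd j (fun z => Real.log (G t z)) y)^2)
        + -(1/2) * (∑ j, pd j (fun z => Real.log (F t z)) y * pd j (fun z => Real.log (G t z)) y)
        + (1/4) * (∑ j, (pd j (fun z => Real.log (F t z)) y)^2)) := by
    funext y
    simp only [hsubpd]
    rw [Finset.mul_sum, Finset.mul_sum, Finset.mul_sum, ← Finset.sum_add_distrib,
      ← Finset.sum_add_distrib]
    exact Finset.sum_congr rfl fun j _ => by ring
  have hab : (fun z => Real.log (F t z * G t z))
      = (fun z => Real.log (F t z) + Real.log (G t z)) :=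
    funext fun z => Real.log_mul (hFpos t ht z).ne' (hGpos t ht z).ne'
  have hC : (fun y => lap (fun z => Real.log (F t z) + Real.log (G t z)) y)
      = (fun y => 1 * lap (fun z => Real.log (F t z)) y
          + 1 * lap (fun z => Real.log (G t z)) y + 0 * V y) := by
    funext y
    rw [lap_add ha hb y]; ring
  have hD : (fun y => ∑ j, (pd j (fun z => Real.log (F t z) + Real.log (G t z)) y)^2)
      = (fun y => 1 * (∑ j, (pd j (fun z => Real.log (F t z)) y)^2)
        + 2 * (∑ j, pd j (fun z => Real.log (F t z)) y * pd j (fun z => Real.log (G t z)) y)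
        + 1 * (∑ j, (pd j (fun z => Real.log (G t z)) y)^2)) := by
    funext y
    simp only [haddpd]
    rw [Finset.mul_sum, Finset.mul_sum, Finset.mul_sum, ← Finset.sum_add_distrib,
      ← Finset.sum_add_distrib]
    exact Finset.sum_congr rfl fun j _ => by ring
  simp only [hab]
  rw [hT1, hDt, hB, hC, hD]
  rw [pd_comb5 i x (-(1/2)) (-(1/2)) (-(1/2)) (-(1/2)) 2 hdLb hdSb hdLa hdSa hdV,
      pd_comb3 i x (1/4) (-(1/2)) (1/4) hdSb hdSab hdSa,
      pd_comb3 i x 1 1 0 hdLa hdLb hdV,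
      pd_comb3 i x 1 2 1 hdSa hdSab hdSb]
  ring


end
end

section
/- Fix α > 0 and ε ∈ (0,1), and let f : ℝ → ℝ be measurable, bounded, nonnegative, compactly supported, and not almost everywhere zero. For t ∈ (0,1] set γ(t) := 2α/(1 − exp(−2αt)) and p_t(x,z) := √(γ(t)/(2π))·exp(−γ(t)·(z − exp(−αt)·x)²/2), and define f_t(x) := ∫_ℝ p_t(x,z)·f(z) dz (so f_t(x) > 0 for all x and x ↦ log f_t(x) is smooth). Then for each l ∈ {1,2,3} there exist constants A ≥ 0 and B ≥ 0 such that for all t ∈ [ε, 1−ε] and all x ∈ ℝ: |(d/dx)^l (log f_t)(x)| ≤ A + B·|x|^l. -/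
open MeasureTheory

noncomputable section

/-- `γ(t) = 2α/(1 - exp(-2αt))`. -/
def gam (α t : ℝ) : ℝ := 2 * α / (1 - Real.exp (-(2 * α * t)))

/-- The transition density of the stationary one-dimensional Ornstein–Uhlenbeck
process: `p_t(x,z) = √(γ(t)/(2π)) exp(-γ(t)(z - exp(-αt)x)²/2)`. -/
def ouKernel (α t x z : ℝ) : ℝ :=
  Real.sqrt (gam α t / (2 * Real.pi)) *
    Real.exp (-(gam α t * (z - Real.exp (-(α * t)) * x)^2 / 2))

/-- `f_t(x) = ∫ p_t(x,z) f(z) dz`. -/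
def ouPotential (α : ℝ) (f : ℝ → ℝ) (t x : ℝ) : ℝ :=
  ∫ z, ouKernel α t x z * f z

namespace OUAux

lemma gam_pos {α t : ℝ} (hα : 0 < α) (ht : 0 < t) : 0 < gam α t := by
  apply div_pos (by linarith)
  have : Real.exp (-(2 * α * t)) < 1 := by
    rw [Real.exp_lt_one_iff]; nlinarith
  linarith

lemma ouKernel_pos {α t x z : ℝ} (hα : 0 < α) (ht : 0 < t) : 0 < ouKernel α t x z :=
  mul_pos (Real.sqrt_pos.2 (div_pos (gam_pos hα ht) (by positivity))) (Real.exp_pos _)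

lemma ouKernel_le {α t x z : ℝ} (hα : 0 < α) (ht : 0 < t) :
    ouKernel α t x z ≤ Real.sqrt (gam α t / (2 * Real.pi)) := by
  have h1 : Real.exp (-(gam α t * (z - Real.exp (-(α * t)) * x)^2 / 2)) ≤ 1 := by
    rw [Real.exp_le_one_iff]
    have := gam_pos hα ht
    nlinarith [sq_nonneg (z - Real.exp (-(α * t)) * x)]
  have h2 : (0:ℝ) ≤ Real.sqrt (gam α t / (2 * Real.pi)) := Real.sqrt_nonneg _
  calc ouKernel α t x z ≤ Real.sqrt (gam α t / (2 * Real.pi)) * 1 := by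
        unfold ouKernel; exact mul_le_mul_of_nonneg_left h1 h2
    _ = _ := mul_one _

lemma ouKernel_meas {α t x : ℝ} : Measurable (fun z => ouKernel α t x z) := by
  unfold ouKernel; fun_prop


def J (α : ℝ) (f : ℝ → ℝ) (k : ℕ) (t x : ℝ) : ℝ :=
  ∫ z, z ^ k * (ouKernel α t x z * f z)

variable {α t : ℝ} {f : ℝ → ℝ} {C R : ℝ}

lemma integrable_J (hα : 0 < α) (ht : 0 < t) (hmeas : Measurable f)
    (hC : ∀ z, f z ≤ C) (hnn : ∀ z, 0 ≤ f z)
    (hR : ∀ z, f z ≠ 0 → |z| ≤ R) (hR0 : 0 ≤ R) (k : ℕ) (x : ℝ) :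
    Integrable (fun z => z ^ k * (ouKernel α t x z * f z)) := by
  have hC0 : 0 ≤ C := le_trans (hnn 0) (hC 0)
  set D := R ^ k * (Real.sqrt (gam α t / (2 * Real.pi)) * C) with hD
  have hD0 : 0 ≤ D := by positivity
  apply Integrable.mono' (g := (Set.Icc (-R) R).indicator fun _ => D)
  · exact (integrableOn_const measure_Icc_lt_top.ne).integrable_indicator
      measurableSet_Icc
  · exact ((measurable_id.pow_const k).mul (ouKernel_meas.mul hmeas)).aestronglyMeasurable
  · filter_upwards with z
    by_cases hf : f z = 0
    · simp only [hf, mul_zero, norm_zero]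
      exact Set.indicator_nonneg (fun _ _ => hD0) z
    · have hz : z ∈ Set.Icc (-R) R := by
        have := hR z hf; rw [abs_le] at this; exact ⟨this.1, this.2⟩
      rw [Set.indicator_of_mem hz]
      have hK := ouKernel_pos (x := x) (z := z) hα ht
      have h1 : ‖z ^ k * (ouKernel α t x z * f z)‖
          = |z| ^ k * (ouKernel α t x z * f z) := by
        rw [Real.norm_eq_abs, abs_mul, abs_pow, abs_of_nonneg
          (mul_nonneg hK.le (hnn z))]
      rw [h1, hD]
      have hzR : |z| ≤ R := hR z hf
      exact mul_le_mul (pow_le_pow_left₀ (abs_nonneg z) hzR k)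
        (mul_le_mul (ouKernel_le hα ht) (hC z) (hnn z) (Real.sqrt_nonneg _))
        (mul_nonneg hK.le (hnn z)) (by positivity)

lemma J_zero_pos (hα : 0 < α) (ht : 0 < t) (hmeas : Measurable f)
    (hC : ∀ z, f z ≤ C) (hnn : ∀ z, 0 ≤ f z)
    (hR : ∀ z, f z ≠ 0 → |z| ≤ R) (hR0 : 0 ≤ R)
    (hne : ¬ (f =ᵐ[volume] 0)) (x : ℝ) : 0 < J α f 0 t x := by
  have hint := integrable_J hα ht hmeas hC hnn hR hR0 0 x
  rw [J, integral_pos_iff_support_of_nonneg_ae ?nn hint]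
  case nn =>
    filter_upwards with z
    simpa using mul_nonneg (ouKernel_pos (x := x) (z := z) hα ht).le (hnn z)
  have hsupp_eq : (Function.support fun z => z ^ 0 * (ouKernel α t x z * f z))
      = Function.support f := by
    ext z
    simp [Function.mem_support, (ouKernel_pos (x := x) (z := z) hα ht).ne']
  rw [hsupp_eq, pos_iff_ne_zero]
  intro h0
  apply hne
  rw [Filter.EventuallyEq, ae_iff]
  simpa [Function.support] using h0

lemma abs_J_le (hα : 0 < α) (ht : 0 < t) (hmeas : Measurable f)
    (hC : ∀ z, f z ≤ C) (hnn : ∀ z, 0 ≤ f z)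
    (hR : ∀ z, f z ≠ 0 → |z| ≤ R) (hR0 : 0 ≤ R) (k : ℕ) (x : ℝ) :
    |J α f k t x| ≤ R ^ k * J α f 0 t x := by
  have hint := integrable_J hα ht hmeas hC hnn hR hR0 k x
  have hint0 := integrable_J hα ht hmeas hC hnn hR hR0 0 x
  calc |J α f k t x| ≤ ∫ z, |z ^ k * (ouKernel α t x z * f z)| := by
        simpa only [Real.norm_eq_abs, J] using
          norm_integral_le_integral_norm (μ := volume)
            (fun z => z ^ k * (ouKernel α t x z * f z))
    _ ≤ ∫ z, R ^ k * (z ^ 0 * (ouKernel α t x z * f z)) := by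
        apply integral_mono hint.abs (hint0.const_mul _)
        intro z
        dsimp only
        by_cases hf : f z = 0
        · simp [hf]
        · have hK := ouKernel_pos (x := x) (z := z) hα ht
          have h1 : |z ^ k * (ouKernel α t x z * f z)|
              = |z| ^ k * (ouKernel α t x z * f z) := by
            rw [abs_mul, abs_pow, abs_of_nonneg (mul_nonneg hK.le (hnn z))]
          rw [h1]
          simp only [pow_zero, one_mul]
          exact mul_le_mul_of_nonneg_right
            (pow_le_pow_left₀ (abs_nonneg z) (hR z hf) k)
            (mul_nonneg hK.le (hnn z))
    _ = R ^ k * J α f 0 t x := integral_const_mul _ _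


lemma hasDerivAt_integrand (k : ℕ) (z y : ℝ) :
    HasDerivAt (fun w => z ^ k * (ouKernel α t w z * f z))
      (Real.exp (-(α * t)) * gam α t * (z - Real.exp (-(α * t)) * y)
        * (z ^ k * (ouKernel α t y z * f z))) y := by
  set β := Real.exp (-(α * t)) with hβ
  set g := gam α t with hg
  have h1 : HasDerivAt (fun w : ℝ => z - β * w) (-β) y := by
    simpa using ((hasDerivAt_id y).const_mul β).const_sub z
  have h2 := h1.pow 2
  have h3 := ((h2.const_mul g).div_const 2).neg
  have h4 := h3.exp
  have h5 := (h4.const_mul (Real.sqrt (g / (2 * Real.pi)))).mul_const (f z)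
  have h6 := h5.const_mul (z ^ k)
  refine h6.congr_deriv ?_
  unfold ouKernel; simp only [← hg, ← hβ, Pi.neg_apply, Pi.pow_apply]; push_cast; ring


lemma hasDerivAt_J (hα : 0 < α) (ht : 0 < t) (hmeas : Measurable f)
    (hC : ∀ z, f z ≤ C) (hnn : ∀ z, 0 ≤ f z)
    (hR : ∀ z, f z ≠ 0 → |z| ≤ R) (hR0 : 0 ≤ R) (k : ℕ) (x : ℝ) :
    HasDerivAt (fun y => J α f k t y)
      (Real.exp (-(α * t)) * gam α t * J α f (k + 1) t x
        - Real.exp (-(α * t)) * gam α t * (Real.exp (-(α * t)) * x) * J α f k t x) x := by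
  have hC0 : 0 ≤ C := le_trans (hnn 0) (hC 0)
  set β := Real.exp (-(α * t)) with hβ
  set g := gam α t with hg
  have hg0 : 0 < g := gam_pos hα ht
  have hβ0 : 0 < β := Real.exp_pos _
  have hβ1 : β ≤ 1 := Real.exp_le_one_iff.2 (by nlinarith)
  set D := β * g * (R + (|x| + 1)) * (R ^ k * (Real.sqrt (g / (2 * Real.pi)) * C))
    with hD
  have hD0 : 0 ≤ D := by positivity
  have key := hasDerivAt_integral_of_dominated_loc_of_deriv_le (μ := volume)
    (F := fun y z => z ^ k * (ouKernel α t y z * f z))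
    (F' := fun y z => β * g * (z - β * y) * (z ^ k * (ouKernel α t y z * f z)))
    (x₀ := x) (bound := (Set.Icc (-R) R).indicator fun _ => D) (Metric.ball_mem_nhds x one_pos)
    ?_ (integrable_J hα ht hmeas hC hnn hR hR0 k x) ?_ ?_ ?_ ?_
  · have h2 : (fun z => β * g * (z - β * x) * (z ^ k * (ouKernel α t x z * f z)))
        = fun z => β * g * (z ^ (k + 1) * (ouKernel α t x z * f z))
          - β * g * (β * x) * (z ^ k * (ouKernel α t x z * f z)) := by
      funext z; ring
    have h3 := key.2
    rw [h2] at h3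
    rw [integral_sub ((integrable_J hα ht hmeas hC hnn hR hR0 (k + 1) x).const_mul _)
      ((integrable_J hα ht hmeas hC hnn hR hR0 k x).const_mul _),
      integral_const_mul, integral_const_mul] at h3
    exact h3
  · filter_upwards with y
    exact ((measurable_id.pow_const k).mul (ouKernel_meas.mul hmeas)).aestronglyMeasurable
  · apply Measurable.aestronglyMeasurable
    apply (measurable_const.mul (measurable_id.sub measurable_const)).mul
    exact (measurable_id.pow_const k).mul (ouKernel_meas.mul hmeas)
  · filter_upwards with z
    intro y hy
    by_cases hf : f z = 0
    · simp only [hf, mul_zero, norm_zero]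
      exact Set.indicator_nonneg (fun _ _ => hD0) z
    · have hzR : |z| ≤ R := hR z hf
      have hz : z ∈ Set.Icc (-R) R := abs_le.1 hzR
      rw [Set.indicator_of_mem hz, hD]
      have hK := ouKernel_pos (x := y) (z := z) hα ht
      have hyx : |y| ≤ |x| + 1 := by
        have := mem_ball_iff_norm.1 hy
        rw [Real.norm_eq_abs] at this
        calc |y| = |x + (y - x)| := by ring_nf
          _ ≤ |x| + |y - x| := abs_add_le _ _
          _ ≤ |x| + 1 := by linarith
      have h1 : ‖β * g * (z - β * y) * (z ^ k * (ouKernel α t y z * f z))‖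
          = β * g * |z - β * y| * (|z| ^ k * (ouKernel α t y z * f z)) := by
        rw [Real.norm_eq_abs, abs_mul, abs_mul, abs_mul, abs_mul, abs_pow,
          abs_of_pos hβ0, abs_of_pos hg0,
          abs_of_nonneg (mul_nonneg hK.le (hnn z))]
      rw [h1]
      have h2 : |z - β * y| ≤ R + (|x| + 1) := by
        calc |z - β * y| ≤ |z| + |β * y| := abs_sub _ _
          _ ≤ R + (|x| + 1) := by
            apply add_le_add hzR
            rw [abs_mul, abs_of_pos hβ0]
            calc β * |y| ≤ 1 * |y| := by
                  exact mul_le_mul_of_nonneg_right hβ1 (abs_nonneg y)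
              _ = |y| := one_mul _
              _ ≤ |x| + 1 := hyx
      apply mul_le_mul
      · exact mul_le_mul_of_nonneg_left h2 (mul_pos hβ0 hg0).le
      · exact mul_le_mul (pow_le_pow_left₀ (abs_nonneg z) hzR k)
          (mul_le_mul (ouKernel_le hα ht) (hC z) (hnn z) (Real.sqrt_nonneg _))
          (mul_nonneg hK.le (hnn z)) (by positivity)
      · exact mul_nonneg (pow_nonneg (abs_nonneg z) k) (mul_nonneg hK.le (hnn z))
      · exact mul_nonneg (mul_nonneg hβ0.le hg0.le) (by positivity)
  · exact (integrableOn_const measure_Icc_lt_top.ne).integrable_indicator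
      measurableSet_Icc
  · filter_upwards with z
    intro y _
    exact hasDerivAt_integrand k z y


end OUAux

open OUAux in
/-- Lemma 5.2 (ii) of the paper: polynomial bounds, uniform in `t ∈ [ε, 1-ε]`,
on the logarithmic derivatives of order `1, 2, 3` of the forward Schrödinger
potential `f_t`. -/
theorem ou_log_derivative_polynomial_bounds
    (α ε : ℝ) (hα : 0 < α) (hε : ε ∈ Set.Ioo (0:ℝ) 1)
    (f : ℝ → ℝ) (hmeas : Measurable f)
    (hbdd : ∃ C, ∀ z, f z ≤ C) (hnn : ∀ z, 0 ≤ f z)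
    (hsupp : HasCompactSupport f)
    (hne : ¬ (f =ᵐ[volume] 0)) :
    ∀ l ∈ ({1, 2, 3} : Set ℕ), ∃ A, 0 ≤ A ∧ ∃ B, 0 ≤ B ∧
      ∀ t ∈ Set.Icc ε (1 - ε), ∀ x : ℝ,
        |iteratedDeriv l (fun y => Real.log (ouPotential α f t y)) x|
          ≤ A + B * |x|^l := by
  obtain ⟨C, hC⟩ := hbdd
  obtain ⟨R₀, hR₀⟩ := hsupp.isCompact.isBounded.subset_closedBall (0:ℝ)
  set R := max R₀ 0 with hRdef
  have hR0 : 0 ≤ R := le_max_right _ _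
  have hR : ∀ z, f z ≠ 0 → |z| ≤ R := by
    intro z hz
    have h1 : z ∈ tsupport f := subset_tsupport f (Function.mem_support.2 hz)
    have h2 := hR₀ h1
    rw [Metric.mem_closedBall, Real.dist_eq, sub_zero] at h2
    exact le_trans h2 (le_max_left _ _)
  set Γ : ℝ := 2 * α / (1 - Real.exp (-(2 * α * ε))) with hΓdef
  have hεe : Real.exp (-(2 * α * ε)) < 1 := by
    rw [Real.exp_lt_one_iff]; nlinarith [hε.1]
  have hΓ : 0 < Γ := div_pos (by linarith) (by linarith)
  -- the key pointwise facts, for each t in the interval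
  have key : ∀ t ∈ Set.Icc ε (1 - ε), ∀ x : ℝ,
      |iteratedDeriv 1 (fun y => Real.log (ouPotential α f t y)) x| ≤ Γ * R + Γ * |x| ∧
      |iteratedDeriv 2 (fun y => Real.log (ouPotential α f t y)) x| ≤ Γ^2 * (2 * R^2) + Γ ∧
      |iteratedDeriv 3 (fun y => Real.log (ouPotential α f t y)) x| ≤ Γ^3 * (6 * R^3) := by
    intro t ht
    have ht0 : 0 < t := lt_of_lt_of_le hε.1 ht.1
    set β := Real.exp (-(α * t)) with hβdef
    set g := gam α t with hgdef
    have hg0 : 0 < g := gam_pos hα ht0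
    have hβ0 : 0 < β := Real.exp_pos _
    have hβ1 : β ≤ 1 := Real.exp_le_one_iff.2 (by nlinarith)
    have hgΓ : g ≤ Γ := by
      rw [hgdef, gam, hΓdef]
      apply div_le_div_of_nonneg_left (by linarith) (by linarith)
      have : Real.exp (-(2 * α * t)) ≤ Real.exp (-(2 * α * ε)) := by
        apply Real.exp_le_exp.2; nlinarith [ht.1]
      linarith
    have hbΓ : β * g ≤ Γ := by
      calc β * g ≤ 1 * g := mul_le_mul_of_nonneg_right hβ1 hg0.le
        _ = g := one_mul _
        _ ≤ Γ := hgΓ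
    have hb0 : 0 < β * g := mul_pos hβ0 hg0
    have hcΓ : β * g * β ≤ Γ := by
      calc β * g * β ≤ β * g * 1 := mul_le_mul_of_nonneg_left hβ1 hb0.le
        _ = β * g := mul_one _
        _ ≤ Γ := hbΓ
    have hc0 : 0 < β * g * β := mul_pos hb0 hβ0
    have hpos : ∀ x, 0 < J α f 0 t x :=
      J_zero_pos hα ht0 hmeas hC hnn hR hR0 hne
    have hJ : ∀ (k : ℕ) (x : ℝ), HasDerivAt (fun y => J α f k t y)
        (β * g * J α f (k + 1) t x - β * g * (β * x) * J α f k t x) x :=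
      fun k x => hasDerivAt_J hα ht0 hmeas hC hnn hR hR0 k x
    have hm : ∀ (k : ℕ) (x : ℝ), |J α f k t x / J α f 0 t x| ≤ R ^ k := by
      intro k x
      rw [abs_div, abs_of_pos (hpos x), div_le_iff₀ (hpos x)]
      exact abs_J_le hα ht0 hmeas hC hnn hR hR0 k x
    -- the three explicit log-derivative functions
    set L1 : ℝ → ℝ := fun y =>
      (β * g * J α f 1 t y - β * g * β * (y * J α f 0 t y)) / J α f 0 t y with hL1def
    set L2 : ℝ → ℝ := fun y =>
      (β * g)^2 * ((J α f 2 t y * J α f 0 t y - (J α f 1 t y)^2) / (J α f 0 t y)^2)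
        - β * g * β with hL2def
    set L3 : ℝ → ℝ := fun y =>
      (β * g)^3 * ((J α f 3 t y * (J α f 0 t y)^2
        - 3 * J α f 1 t y * J α f 2 t y * J α f 0 t y + 2 * (J α f 1 t y)^3)
        / (J α f 0 t y)^3) with hL3def
    have hFJ : (fun y => Real.log (ouPotential α f t y))
        = fun y => Real.log (J α f 0 t y) := by
      funext y
      congr 1
      simp only [J, ouPotential, pow_zero, one_mul]
    -- first derivative
    have hlog : ∀ x, HasDerivAt (fun y => Real.log (J α f 0 t y)) (L1 x) x := by
      intro x
      have h := (hJ 0 x).log (hpos x).ne'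
      have heq : (β * g * J α f 1 t x - β * g * (β * x) * J α f 0 t x) / J α f 0 t x
          = L1 x := by rw [hL1def]; ring
      exact heq ▸ h
    have hd1 : deriv (fun y => Real.log (ouPotential α f t y)) = L1 := by
      rw [hFJ]; exact funext fun y => (hlog y).deriv
    -- second derivative
    have hL1' : ∀ x, HasDerivAt L1 (L2 x) x := by
      intro x
      have hnum : HasDerivAt
          (fun y => β * g * J α f 1 t y - β * g * β * (y * J α f 0 t y))
          (β * g * (β * g * J α f 2 t x - β * g * (β * x) * J α f 1 t x)
            - β * g * β * (1 * J α f 0 t x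
              + x * (β * g * J α f 1 t x - β * g * (β * x) * J α f 0 t x))) x :=
        ((hJ 1 x).const_mul (β * g)).sub
          (((hasDerivAt_id x).mul (hJ 0 x)).const_mul (β * g * β))
      have h := hnum.div (hJ 0 x) (hpos x).ne'
      have heq : ((β * g * (β * g * J α f 2 t x - β * g * (β * x) * J α f 1 t x)
            - β * g * β * (1 * J α f 0 t x
              + x * (β * g * J α f 1 t x - β * g * (β * x) * J α f 0 t x)))
            * J α f 0 t x
          - (β * g * J α f 1 t x - β * g * β * (x * J α f 0 t x))
            * (β * g * J α f 1 t x - β * g * (β * x) * J α f 0 t x))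
          / (J α f 0 t x) ^ 2 = L2 x := by
        rw [hL2def]
        have h0 := (hpos x).ne'
        field_simp
        ring
      exact heq ▸ h
    have hd2 : ∀ x, iteratedDeriv 2 (fun y => Real.log (ouPotential α f t y)) x
        = L2 x := by
      intro x
      rw [iteratedDeriv_succ, iteratedDeriv_one, hd1]
      exact (hL1' x).deriv
    -- third derivative
    have hL2' : ∀ x, HasDerivAt L2 (L3 x) x := by
      intro x
      have hnum : HasDerivAt
          (fun y => J α f 2 t y * J α f 0 t y - (J α f 1 t y)^2)
          ((β * g * J α f 3 t x - β * g * (β * x) * J α f 2 t x) * J α f 0 t x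
            + J α f 2 t x * (β * g * J α f 1 t x - β * g * (β * x) * J α f 0 t x)
            - (2:ℕ) * (J α f 1 t x)^(2-1)
              * (β * g * J α f 2 t x - β * g * (β * x) * J α f 1 t x)) x :=
        ((hJ 2 x).mul (hJ 0 x)).sub ((hJ 1 x).pow 2)
      have hden : HasDerivAt (fun y => (J α f 0 t y)^2)
          ((2:ℕ) * (J α f 0 t x)^(2-1)
            * (β * g * J α f 1 t x - β * g * (β * x) * J α f 0 t x)) x :=
        (hJ 0 x).pow 2
      have h := ((hnum.div hden (pow_ne_zero 2 (hpos x).ne')).const_mul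
        ((β * g)^2)).sub_const (β * g * β)
      have heq : (β * g)^2 * ((((β * g * J α f 3 t x - β * g * (β * x) * J α f 2 t x)
            * J α f 0 t x
            + J α f 2 t x * (β * g * J α f 1 t x - β * g * (β * x) * J α f 0 t x)
            - (2:ℕ) * (J α f 1 t x)^(2-1)
              * (β * g * J α f 2 t x - β * g * (β * x) * J α f 1 t x))
            * (J α f 0 t x)^2
          - (J α f 2 t x * J α f 0 t x - (J α f 1 t x)^2)
            * ((2:ℕ) * (J α f 0 t x)^(2-1)
              * (β * g * J α f 1 t x - β * g * (β * x) * J α f 0 t x)))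
          / ((J α f 0 t x)^2)^2) = L3 x := by
        rw [hL3def]
        have h0 := (hpos x).ne'
        field_simp
        ring
      exact heq ▸ h
    have hd3 : ∀ x, iteratedDeriv 3 (fun y => Real.log (ouPotential α f t y)) x
        = L3 x := by
      intro x
      rw [iteratedDeriv_succ, funext hd2]
      exact (hL2' x).deriv
    -- now the bounds
    intro x
    have h0 := (hpos x).ne'
    refine ⟨?_, ?_, ?_⟩
    · rw [iteratedDeriv_one, hd1]
      have heq : L1 x = β * g * (J α f 1 t x / J α f 0 t x) - β * g * β * x := by
        rw [hL1def]; field_simp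
      rw [heq]
      calc |β * g * (J α f 1 t x / J α f 0 t x) - β * g * β * x|
          ≤ |β * g * (J α f 1 t x / J α f 0 t x)| + |β * g * β * x| := abs_sub _ _
        _ ≤ Γ * R + Γ * |x| := by
            apply add_le_add
            · rw [abs_mul, abs_of_pos hb0]
              calc β * g * |J α f 1 t x / J α f 0 t x| ≤ Γ * R ^ 1 :=
                    mul_le_mul hbΓ (hm 1 x) (abs_nonneg _) hΓ.le
                _ = Γ * R := by rw [pow_one]
            · rw [abs_mul, abs_of_pos hc0]
              exact mul_le_mul_of_nonneg_right hcΓ (abs_nonneg x)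
    · rw [hd2 x]
      have heq : (J α f 2 t x * J α f 0 t x - (J α f 1 t x)^2) / (J α f 0 t x)^2
          = J α f 2 t x / J α f 0 t x - (J α f 1 t x / J α f 0 t x)^2 := by
        field_simp
      have hkey : |(J α f 2 t x * J α f 0 t x - (J α f 1 t x)^2) / (J α f 0 t x)^2|
          ≤ 2 * R^2 := by
        rw [heq]
        calc |J α f 2 t x / J α f 0 t x - (J α f 1 t x / J α f 0 t x)^2|
            ≤ |J α f 2 t x / J α f 0 t x| + |(J α f 1 t x / J α f 0 t x)^2| :=
              abs_sub _ _
          _ ≤ R^2 + R^2 := by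
              apply add_le_add (hm 2 x)
              rw [abs_pow]
              calc |J α f 1 t x / J α f 0 t x|^2 ≤ (R^1)^2 :=
                    pow_le_pow_left₀ (abs_nonneg _) (hm 1 x) 2
                _ = R^2 := by ring
          _ = 2 * R^2 := by ring
      simp only [hL2def]
      have t1 : |(β * g)^2 * ((J α f 2 t x * J α f 0 t x - (J α f 1 t x)^2)
          / (J α f 0 t x)^2)| ≤ Γ^2 * (2 * R^2) := by
        rw [abs_mul, abs_pow, abs_of_pos hb0]
        exact mul_le_mul (pow_le_pow_left₀ hb0.le hbΓ 2) hkey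
          (abs_nonneg _) (by positivity)
      have t2 : |β * g * β| ≤ Γ := by rw [abs_of_pos hc0]; exact hcΓ
      calc |(β * g)^2 * ((J α f 2 t x * J α f 0 t x - (J α f 1 t x)^2)
            / (J α f 0 t x)^2) - β * g * β|
          ≤ |(β * g)^2 * ((J α f 2 t x * J α f 0 t x - (J α f 1 t x)^2)
            / (J α f 0 t x)^2)| + |β * g * β| := abs_sub _ _
        _ ≤ Γ^2 * (2 * R^2) + Γ := add_le_add t1 t2
    · rw [hd3 x]
      have heq : (J α f 3 t x * (J α f 0 t x)^2
            - 3 * J α f 1 t x * J α f 2 t x * J α f 0 t x + 2 * (J α f 1 t x)^3)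
            / (J α f 0 t x)^3
          = J α f 3 t x / J α f 0 t x
            - 3 * (J α f 1 t x / J α f 0 t x) * (J α f 2 t x / J α f 0 t x)
            + 2 * (J α f 1 t x / J α f 0 t x)^3 := by
        field_simp
      have hkey : |(J α f 3 t x * (J α f 0 t x)^2
            - 3 * J α f 1 t x * J α f 2 t x * J α f 0 t x + 2 * (J α f 1 t x)^3)
            / (J α f 0 t x)^3| ≤ 6 * R^3 := by
        rw [heq]
        set m1 := J α f 1 t x / J α f 0 t x
        set m2 := J α f 2 t x / J α f 0 t x
        set m3 := J α f 3 t x / J α f 0 t x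
        have h1 : |m1| ≤ R := by have := hm 1 x; rwa [pow_one] at this
        have h2 : |m2| ≤ R^2 := hm 2 x
        have h3 : |m3| ≤ R^3 := hm 3 x
        have u1 : |3 * m1 * m2| ≤ 3 * R * R^2 := by
          rw [abs_mul, abs_mul, abs_of_pos (by norm_num : (0:ℝ) < 3)]
          exact mul_le_mul (mul_le_mul_of_nonneg_left h1 (by norm_num))
            h2 (abs_nonneg _) (by positivity)
        have u2 : |2 * m1^3| ≤ 2 * R^3 := by
          rw [abs_mul, abs_pow, abs_of_pos (by norm_num : (0:ℝ) < 2)]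
          exact mul_le_mul_of_nonneg_left
            (pow_le_pow_left₀ (abs_nonneg _) h1 3) (by norm_num)
        calc |m3 - 3 * m1 * m2 + 2 * m1^3|
            ≤ |m3 - 3 * m1 * m2| + |2 * m1^3| := abs_add_le _ _
          _ ≤ (|m3| + |3 * m1 * m2|) + |2 * m1^3| :=
              add_le_add_left (abs_sub _ _) _
          _ ≤ (R^3 + 3 * R * R^2) + 2 * R^3 :=
              add_le_add (add_le_add h3 u1) u2
          _ = 6 * R^3 := by ring
      simp only [hL3def]
      rw [abs_mul, abs_pow, abs_of_pos hb0]
      exact mul_le_mul (pow_le_pow_left₀ hb0.le hbΓ 3) hkey (abs_nonneg _)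
        (by positivity)
  intro l hl
  simp only [Set.mem_insert_iff, Set.mem_singleton_iff] at hl
  rcases hl with rfl | rfl | rfl
  · exact ⟨Γ * R, by positivity, Γ, hΓ.le, fun t ht x => by
      simpa [pow_one] using (key t ht x).1⟩
  · exact ⟨Γ^2 * (2 * R^2) + Γ, by positivity, 0, le_refl _, fun t ht x => by
      simpa using (key t ht x).2.1⟩
  · exact ⟨Γ^3 * (6 * R^3), by positivity, 0, le_refl _, fun t ht x => by
      simpa using (key t ht x).2.2⟩

end
end

section
/- Fix α > 0 and ε ∈ (0,1), and let f : ℝ → ℝ be measurable, bounded, nonnegative, compactly supported, and not almost everywhere zero. For t ∈ (0,1] set γ(t) := 2α/(1 − exp(−2αt)) and p_t(x,z) := √(γ(t)/(2π))·exp(−γ(t)·(z − exp(−αt)·x)²/2), and define f_t(x) := ∫_ℝ p_t(x,z)·f(z) dz (so f_t(x) > 0 for all x and x ↦ log f_t(x) is smooth). Then there exists a constant C such that for all t ∈ [ε, 1−ε] and all x ∈ ℝ: |(d/dx)² (log f_t)(x)| ≤ C. -/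
open MeasureTheory

noncomputable section
set_option maxHeartbeats 1000000

open Metric in

lemma integrable_expMul (g : ℝ → ℝ) (hg : Measurable g) (R Cb : ℝ) (hR : 0 ≤ R)
    (hsupp : ∀ z, z ∉ Set.Icc (-R) R → g z = 0) (hb : ∀ z, |g z| ≤ Cb) (c : ℝ) :
    Integrable (fun z => Real.exp (c * z) * g z) := by
  refine Integrable.mono'
      (g := Set.indicator (Set.Icc (-R) R) (fun _ => Real.exp (|c| * R) * Cb)) ?_ ?_ ?_
  · exact (integrable_indicator_iff measurableSet_Icc).2
      (integrableOn_const measure_Icc_lt_top.ne)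
  · exact ((Real.measurable_exp.comp (measurable_const.mul measurable_id)).mul
      hg).aestronglyMeasurable
  · refine Filter.Eventually.of_forall fun z => ?_
    by_cases hz : z ∈ Set.Icc (-R) R
    · rw [Set.indicator_of_mem hz]
      have habs : |z| ≤ R := abs_le.2 ⟨hz.1, hz.2⟩
      have h1 : Real.exp (c * z) ≤ Real.exp (|c| * R) := by
        apply Real.exp_le_exp.2
        calc c * z ≤ |c * z| := le_abs_self _
          _ = |c| * |z| := abs_mul _ _
          _ ≤ |c| * R := by nlinarith [abs_nonneg c]
      have h2 : (0:ℝ) ≤ Cb := le_trans (abs_nonneg _) (hb z)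
      rw [Real.norm_eq_abs, abs_mul, Real.abs_exp]
      exact mul_le_mul h1 (hb z) (abs_nonneg _) (Real.exp_nonneg _)
    · rw [Set.indicator_of_notMem hz, hsupp z hz]
      simp

lemma expMul_hasDerivAt (g : ℝ → ℝ) (hg : Measurable g) (R Cb β : ℝ) (hR : 0 ≤ R)
    (hsupp : ∀ z, z ∉ Set.Icc (-R) R → g z = 0) (hb : ∀ z, |g z| ≤ Cb) (y : ℝ) :
    HasDerivAt (fun y => ∫ z, Real.exp (β * y * z) * g z)
      (∫ z, Real.exp (β * y * z) * (β * z * g z)) y := by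
  have key := hasDerivAt_integral_of_dominated_loc_of_deriv_le (μ := volume)
    (F := fun y z => Real.exp (β * y * z) * g z)
    (F' := fun y z => Real.exp (β * y * z) * (β * z * g z)) (x₀ := y)
    (bound := Set.indicator (Set.Icc (-R) R)
      (fun _ => Real.exp (|β| * (|y| + 1) * R) * (|β| * R * Cb)))
    (s := Metric.ball y 1) (Metric.ball_mem_nhds y one_pos) ?_ ?_ ?_ ?_ ?_ ?_
  · exact key.2
  · refine Filter.Eventually.of_forall fun y' => ?_
    exact ((Real.measurable_exp.comp ((measurable_const.mul measurable_id))).mul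
      hg).aestronglyMeasurable
  · exact integrable_expMul g hg R Cb hR hsupp hb _
  · have : Measurable fun z => β * z * g z := (measurable_const.mul measurable_id).mul hg
    exact ((Real.measurable_exp.comp (measurable_const.mul measurable_id)).mul
      this).aestronglyMeasurable
  · refine Filter.Eventually.of_forall fun z => fun y' hy' => ?_
    by_cases hz : z ∈ Set.Icc (-R) R
    · rw [Set.indicator_of_mem hz]
      have habs : |z| ≤ R := abs_le.2 ⟨hz.1, hz.2⟩
      have hy'' : |y'| ≤ |y| + 1 := by
        have := mem_ball_iff_norm.1 hy'
        rw [Real.norm_eq_abs] at this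
        calc |y'| = |y + (y' - y)| := by ring_nf
          _ ≤ |y| + |y' - y| := abs_add_le _ _
          _ ≤ |y| + 1 := by linarith
      have h1 : Real.exp (β * y' * z) ≤ Real.exp (|β| * (|y| + 1) * R) := by
        apply Real.exp_le_exp.2
        calc β * y' * z ≤ |β * y' * z| := le_abs_self _
          _ = |β| * |y'| * |z| := by rw [abs_mul, abs_mul]
          _ ≤ |β| * (|y| + 1) * R := by
              have := mul_le_mul (mul_le_mul_of_nonneg_left hy'' (abs_nonneg β)) habs
                (abs_nonneg z) (by positivity)
              linarith
      have h2 : |β * z * g z| ≤ |β| * R * Cb := by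
        rw [abs_mul, abs_mul]
        exact mul_le_mul (mul_le_mul_of_nonneg_left habs (abs_nonneg β)) (hb z)
          (abs_nonneg _) (by positivity)
      rw [Real.norm_eq_abs, abs_mul, Real.abs_exp]
      exact mul_le_mul h1 h2 (abs_nonneg _) (Real.exp_nonneg _)
    · rw [Set.indicator_of_notMem hz]
      show ‖Real.exp (β * y' * z) * (β * z * g z)‖ ≤ 0
      rw [hsupp z hz]
      simp
  · exact (integrable_indicator_iff measurableSet_Icc).2
      (integrableOn_const measure_Icc_lt_top.ne)
  · refine Filter.Eventually.of_forall fun z => fun y' _ => ?_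
    have h1 : HasDerivAt (fun y' => β * y' * z) (β * z) y' := by
      simpa using ((hasDerivAt_id y').const_mul β).mul_const z
    have := (h1.exp).mul_const (g z)
    exact this.congr_deriv (by ring)


/-- Lemma 5.2 (iii) of the paper: a uniform bound on the second logarithmic
derivative of the forward Schrödinger potential `f_t`, uniform in `x ∈ ℝ` and
`t ∈ [ε, 1-ε]`. -/
theorem ou_log_second_derivative_uniform_bound
    (α ε : ℝ) (hα : 0 < α) (hε : ε ∈ Set.Ioo (0:ℝ) 1)
    (f : ℝ → ℝ) (hmeas : Measurable f)
    (hbdd : ∃ C, ∀ z, f z ≤ C) (hnn : ∀ z, 0 ≤ f z)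
    (hsupp : HasCompactSupport f)
    (hne : ¬ (f =ᵐ[volume] 0)) :
    ∃ C : ℝ, ∀ t ∈ Set.Icc ε (1 - ε), ∀ x : ℝ,
      |iteratedDeriv 2 (fun y => Real.log (ouPotential α f t y)) x| ≤ C := by
  obtain ⟨Cf, hCf⟩ := hbdd
  have hCf0 : (0:ℝ) ≤ Cf := le_trans (hnn 0) (hCf 0)
  obtain ⟨R0, hR0⟩ := hsupp.isCompact.isBounded.subset_closedBall 0
  set R : ℝ := max R0 0 with hRdef
  have hR : (0:ℝ) ≤ R := le_max_right _ _
  have hfz : ∀ z, z ∉ Set.Icc (-R) R → f z = 0 := by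
    intro z hz
    apply image_eq_zero_of_notMem_tsupport
    intro hmem
    have := hR0 hmem
    rw [Real.closedBall_eq_Icc] at this
    have hle : R0 ≤ R := le_max_left _ _
    exact hz ⟨by linarith [this.1], by linarith [this.2]⟩
  set γε : ℝ := gam α ε with hγεdef
  have hdenε : (0:ℝ) < 1 - Real.exp (-(2 * α * ε)) := by
    have : Real.exp (-(2 * α * ε)) < 1 := Real.exp_lt_one_iff.2 (by nlinarith [hε.1])
    linarith
  have hγε : 0 < γε := div_pos (by linarith) hdenε
  refine ⟨γε + γε^2 * R^2, ?_⟩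
  intro t ht x
  have hεt : 0 < t := lt_of_lt_of_le hε.1 ht.1
  set γ : ℝ := gam α t with hγdef
  have hden : (0:ℝ) < 1 - Real.exp (-(2 * α * t)) := by
    have : Real.exp (-(2 * α * t)) < 1 := Real.exp_lt_one_iff.2 (by nlinarith)
    linarith
  have hγ : 0 < γ := div_pos (by linarith) hden
  have hγle : γ ≤ γε := by
    rw [hγdef, hγεdef]
    unfold gam
    apply div_le_div_of_nonneg_left (by linarith) hdenε
    have : Real.exp (-(2 * α * t)) ≤ Real.exp (-(2 * α * ε)) := by
      apply Real.exp_le_exp.2; nlinarith [ht.1]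
    linarith
  set m : ℝ := Real.exp (-(α * t)) with hmdef
  have hm : 0 < m := Real.exp_pos _
  have hm1 : m ≤ 1 := Real.exp_le_one_iff.2 (by nlinarith)
  set β : ℝ := γ * m with hβdef
  have hβ : 0 < β := mul_pos hγ hm
  have hβle : β ≤ γε := by nlinarith
  set c : ℝ := Real.sqrt (γ / (2 * Real.pi)) with hcdef
  have hc : 0 < c := Real.sqrt_pos.2 (div_pos hγ (by positivity))
  set g : ℝ → ℝ := fun z => Real.exp (-(γ * z^2 / 2)) * f z with hgdef
  have hgmeas : Measurable g := by
    rw [hgdef]; fun_prop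
  have hgnn : ∀ z, 0 ≤ g z := fun z => mul_nonneg (Real.exp_nonneg _) (hnn z)
  have hgsupp : ∀ z, z ∉ Set.Icc (-R) R → g z = 0 := by
    intro z hz; rw [hgdef]; simp only [hfz z hz, mul_zero]
  have hgb : ∀ z, |g z| ≤ Cf := by
    intro z
    rw [abs_of_nonneg (hgnn z), hgdef]
    calc Real.exp (-(γ * z^2 / 2)) * f z ≤ 1 * f z := by
          apply mul_le_mul_of_nonneg_right _ (hnn z)
          exact Real.exp_le_one_iff.2 (by nlinarith [sq_nonneg z])
      _ = f z := one_mul _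
      _ ≤ Cf := hCf z
  have hgne : ¬ (g =ᵐ[volume] 0) := by
    intro h
    apply hne
    filter_upwards [h] with z hz
    have : Real.exp (-(γ * z^2 / 2)) ≠ 0 := Real.exp_ne_zero _
    simp only [hgdef, Pi.zero_apply] at hz ⊢
    exact (mul_eq_zero.1 hz).resolve_left this
  set g1 : ℝ → ℝ := fun z => β * z * g z with hg1def
  have hg1meas : Measurable g1 := (measurable_const.mul measurable_id).mul hgmeas
  have hg1supp : ∀ z, z ∉ Set.Icc (-R) R → g1 z = 0 := by
    intro z hz; rw [hg1def]; simp only [hgsupp z hz, mul_zero]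
  have hg1b : ∀ z, |g1 z| ≤ β * R * Cf := by
    intro z
    by_cases hz : z ∈ Set.Icc (-R) R
    · rw [hg1def]
      simp only [abs_mul, abs_of_pos hβ]
      have h1 : |z| ≤ R := abs_le.2 ⟨hz.1, hz.2⟩
      exact le_trans (mul_le_mul_of_nonneg_right (mul_le_mul_of_nonneg_left h1 hβ.le)
        (abs_nonneg _)) (mul_le_mul_of_nonneg_left (hgb z) (by positivity))
    · rw [hg1supp z hz]; simp; positivity
  set F : ℝ → ℝ := fun y => ∫ z, Real.exp (β * y * z) * g z with hFdef
  set D1 : ℝ → ℝ := fun y => ∫ z, Real.exp (β * y * z) * (β * z * g z) with hD1def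
  set D2 : ℝ → ℝ := fun y => ∫ z, Real.exp (β * y * z) * (β * z * (β * z * g z))
    with hD2def
  have hF : ∀ y, HasDerivAt F (D1 y) y := fun y =>
    expMul_hasDerivAt g hgmeas R Cf β hR hgsupp hgb y
  have hD1 : ∀ y, HasDerivAt D1 (D2 y) y := fun y =>
    expMul_hasDerivAt g1 hg1meas R (β * R * Cf) β hR hg1supp hg1b y
  have hFint : ∀ y, Integrable (fun z => Real.exp (β * y * z) * g z) := fun y =>
    integrable_expMul g hgmeas R Cf hR hgsupp hgb (β * y)
  have hD2int : Integrable (fun z => Real.exp (β * x * z) * (β * z * (β * z * g z))) := by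
    have h2supp : ∀ z, z ∉ Set.Icc (-R) R → β * z * g1 z = 0 := by
      intro z hz; rw [hg1supp z hz, mul_zero]
    have h2b : ∀ z, |β * z * g1 z| ≤ β * R * (β * R * Cf) := by
      intro z
      by_cases hz : z ∈ Set.Icc (-R) R
      · simp only [abs_mul, abs_of_pos hβ]
        have h1 : |z| ≤ R := abs_le.2 ⟨hz.1, hz.2⟩
        exact le_trans (mul_le_mul_of_nonneg_right (mul_le_mul_of_nonneg_left h1 hβ.le)
          (abs_nonneg _)) (mul_le_mul_of_nonneg_left (hg1b z) (by positivity))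
      · rw [hg1supp z hz]; simp; positivity
    exact integrable_expMul (fun z => β * z * g1 z)
      ((measurable_const.mul measurable_id).mul hg1meas) R (β * R * (β * R * Cf)) hR
      h2supp h2b (β * x)
  have hFpos : ∀ y, 0 < F y := by
    intro y
    rw [hFdef]
    rw [integral_pos_iff_support_of_nonneg
      (fun z => mul_nonneg (Real.exp_nonneg _) (hgnn z)) (hFint y)]
    have hss : Function.support g ⊆ Function.support fun z => Real.exp (β * y * z) * g z := by
      intro z hz
      simp only [Function.mem_support] at hz ⊢
      exact mul_ne_zero (Real.exp_ne_zero _) hz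
    have hpos : 0 < volume (Function.support g) := by
      rcases eq_zero_or_pos (volume (Function.support g)) with h0 | h
      · exfalso
        apply hgne
        rw [Filter.EventuallyEq, ae_iff]
        simpa [Function.support] using h0
      · exact h
    exact lt_of_lt_of_le hpos (measure_mono hss)
  -- the key identity
  have hId : (fun y => Real.log (ouPotential α f t y)) =
      fun y => Real.log c + (-(γ * m^2 * y^2 / 2) + Real.log (F y)) := by
    funext y
    have hpt : ouPotential α f t y = c * Real.exp (-(γ * m^2 * y^2 / 2)) * F y := by
      rw [ouPotential, hFdef]
      rw [← integral_const_mul]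
      congr 1
      funext z
      rw [ouKernel, ← hγdef, ← hmdef, ← hcdef, hgdef]
      have hexp : Real.exp (-(γ * (z - m * y)^2 / 2)) =
          Real.exp (-(γ * m^2 * y^2 / 2)) * (Real.exp (β * y * z) *
            Real.exp (-(γ * z^2 / 2))) := by
        rw [← Real.exp_add, ← Real.exp_add, hβdef]
        congr 1
        ring
      rw [hexp]
      ring
    rw [hpt, Real.log_mul (by positivity) (ne_of_gt (hFpos y)),
      Real.log_mul (ne_of_gt hc) (Real.exp_ne_zero _), Real.log_exp, add_assoc]
  have hA : ∀ y : ℝ, HasDerivAt (fun y : ℝ => -(γ * m^2 * y^2 / 2)) (-(γ * m^2 * y)) y := by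
    intro y
    have h2 : (fun y : ℝ => -(γ * m^2 * y^2 / 2)) = fun y : ℝ => (-(γ * m^2) / 2) * y^2 := by
      funext w; ring
    rw [h2]
    have h := (hasDerivAt_pow 2 y).const_mul (-(γ * m^2) / 2)
    exact h.congr_deriv (by rw [show (2:ℕ) - 1 = 1 from rfl]; push_cast; ring)
  set G : ℝ → ℝ := fun y => -(γ * m^2 * y) + D1 y / F y with hGdef
  have hlog : ∀ y, HasDerivAt (fun y => Real.log (ouPotential α f t y)) (G y) y := by
    intro y
    rw [hId]
    have h2 := (hF y).log (ne_of_gt (hFpos y))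
    have := (hasDerivAt_const y (Real.log c)).add ((hA y).add h2)
    exact this.congr_deriv (by simp [hGdef])
  have hderiv_eq : deriv (fun y => Real.log (ouPotential α f t y)) = G :=
    funext fun y => (hlog y).deriv
  set V : ℝ := -(γ * m^2) + (D2 x * F x - D1 x * D1 x) / F x ^ 2 with hVdef
  have hG : HasDerivAt G V x := by
    have h1 : HasDerivAt (fun y : ℝ => -(γ * m^2 * y)) (-(γ * m^2)) x := by
      have := ((hasDerivAt_id x).const_mul (γ * m^2)).neg
      exact this.congr_deriv (by ring)
    have h2 := (hD1 x).div (hF x) (ne_of_gt (hFpos x))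
    exact h1.add h2
  have hIter : iteratedDeriv 2 (fun y => Real.log (ouPotential α f t y)) x = V := by
    rw [iteratedDeriv_succ, iteratedDeriv_one, hderiv_eq]
    exact hG.deriv
  rw [hIter]
  -- bounds
  set S : ℝ := F x with hSdef
  have hS : 0 < S := hFpos x
  have hD2nn : 0 ≤ D2 x := by
    rw [hD2def]
    apply integral_nonneg
    intro z
    simp only [Pi.zero_apply]
    have h : Real.exp (β * x * z) * (β * z * (β * z * g z)) =
        Real.exp (β * x * z) * (β * z)^2 * g z := by ring
    rw [h]
    exact mul_nonneg (mul_nonneg (Real.exp_nonneg _) (sq_nonneg _)) (hgnn z)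
  have hD2le : D2 x ≤ β^2 * R^2 * S := by
    have hmono : D2 x ≤ ∫ z, β^2 * R^2 * (Real.exp (β * x * z) * g z) := by
      rw [hD2def]
      apply integral_mono hD2int ((hFint x).const_mul _)
      intro z
      beta_reduce
      by_cases hz : z ∈ Set.Icc (-R) R
      · have h1 : |z| ≤ R := abs_le.2 ⟨hz.1, hz.2⟩
        have h2 : (β * z)^2 ≤ β^2 * R^2 := by
          have hz2 : z^2 ≤ R^2 := sq_le_sq' hz.1 hz.2
          nlinarith [sq_nonneg β]
        have h3 : Real.exp (β * x * z) * (β * z * (β * z * g z)) =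
            (β * z)^2 * (Real.exp (β * x * z) * g z) := by ring
        rw [h3]
        apply mul_le_mul_of_nonneg_right h2
        exact mul_nonneg (Real.exp_nonneg _) (hgnn z)
      · rw [hgsupp z hz]
        simp
    calc D2 x ≤ ∫ z, β^2 * R^2 * (Real.exp (β * x * z) * g z) := hmono
      _ = β^2 * R^2 * S := by rw [integral_const_mul]
  have hD1abs : |D1 x| ≤ β * R * S := by
    have h1 : |D1 x| ≤ ∫ z, |Real.exp (β * x * z) * (β * z * g z)| := by
      rw [hD1def]
      simpa only [Real.norm_eq_abs] using
        norm_integral_le_integral_norm (μ := volume)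
          (fun z => Real.exp (β * x * z) * (β * z * g z))
    have h2 : (∫ z, |Real.exp (β * x * z) * (β * z * g z)|) ≤
        ∫ z, β * R * (Real.exp (β * x * z) * g z) := by
      apply integral_mono _ ((hFint x).const_mul _)
      · intro z
        beta_reduce
        by_cases hz : z ∈ Set.Icc (-R) R
        · have hzR : |z| ≤ R := abs_le.2 ⟨hz.1, hz.2⟩
          rw [abs_mul, Real.abs_exp, abs_mul, abs_mul, abs_of_pos hβ,
            abs_of_nonneg (hgnn z)]
          have h3 : |z| * g z ≤ R * g z := mul_le_mul_of_nonneg_right hzR (hgnn z)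
          have hE := Real.exp_nonneg (β * x * z)
          have h4 := mul_le_mul_of_nonneg_left (mul_le_mul_of_nonneg_left h3 hβ.le) hE
          nlinarith [h4]
        · rw [hgsupp z hz]
          simp
      · exact (integrable_expMul g1 hg1meas R (β * R * Cf) hR hg1supp hg1b (β * x)).abs
    calc |D1 x| ≤ _ := h1
      _ ≤ ∫ z, β * R * (Real.exp (β * x * z) * g z) := h2
      _ = β * R * S := by rw [integral_const_mul]
  have hsq : D1 x * D1 x ≤ (β * R * S) * (β * R * S) := by
    have h := mul_le_mul hD1abs hD1abs (abs_nonneg _) (by positivity)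
    rwa [abs_mul_abs_self] at h
  have hdivle : (D2 x * S - D1 x * D1 x) / S^2 ≤ β^2 * R^2 := by
    rw [div_le_iff₀ (by positivity)]
    nlinarith [sq_nonneg (D1 x)]
  have hdivge : -(β^2 * R^2) ≤ (D2 x * S - D1 x * D1 x) / S^2 := by
    rw [le_div_iff₀ (by positivity)]
    nlinarith
  have hββ : β * β ≤ γε * γε := mul_le_mul hβle hβle hβ.le hγε.le
  have hb2 : β^2 * R^2 ≤ γε^2 * R^2 := by
    nlinarith [mul_le_mul_of_nonneg_right hββ (sq_nonneg R)]
  have hγm : γ * m^2 ≤ γε := by nlinarith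
  have hγm0 : 0 < γ * m^2 := by positivity
  rw [hVdef]
  rw [abs_le]
  constructor
  · linarith
  · linarith

end
end

section
/- Fix α > 0, t ∈ (0,1], and let f : ℝ → ℝ be measurable, bounded, nonnegative, compactly supported, and not almost everywhere zero. Set γ(t) := 2α/(1 − exp(−2αt)), p_t(x,z) := √(γ(t)/(2π))·exp(−γ(t)·(z − exp(−αt)·x)²/2), and f_t(x) := ∫_ℝ p_t(x,z)·f(z) dz. Then for every x ∈ ℝ: (d/dx)² (log f_t)(x) = γ(t)²·exp(−2αt)·( f_t(x)·∫_ℝ z²·f(z)·p_t(x,z) dz − (∫_ℝ z·f(z)·p_t(x,z) dz)² ) / f_t(x)² − γ(t)·exp(−2αt). -/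
open MeasureTheory

noncomputable section

lemma aux_integrable (h f : ℝ → ℝ) (hh : Continuous h) (hf : Measurable f)
    (C : ℝ) (hC : ∀ z, |f z| ≤ C) (hsupp : HasCompactSupport f) :
    Integrable (fun z => h z * f z) := by
  obtain ⟨Q, hQ⟩ := hsupp.isCompact.exists_bound_of_continuousOn hh.continuousOn
  have hmeasset : MeasurableSet (tsupport f) := (isClosed_tsupport f).measurableSet
  have hind : Integrable ((tsupport f).indicator (fun _ => max Q 0 * C)) := by
    rw [integrable_indicator_iff hmeasset]
    exact integrableOn_const hsupp.isCompact.measure_lt_top.ne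
  refine hind.mono' ((hh.measurable.mul hf).aestronglyMeasurable) ?_
  filter_upwards with z
  by_cases hz : z ∈ tsupport f
  · rw [Set.indicator_of_mem hz]
    calc ‖h z * f z‖ = |h z| * |f z| := abs_mul _ _
    _ ≤ max Q 0 * C := mul_le_mul (le_trans (hQ z hz) (le_max_left _ _)) (hC z)
        (abs_nonneg _) (le_max_right _ _)
  · rw [Set.indicator_of_notMem hz, image_eq_zero_of_notMem_tsupport hz]
    simp

lemma aux_hasDerivAt (g c K : ℝ) (hg : 0 ≤ g) (hK : 0 ≤ K)
    (f : ℝ → ℝ) (hf : Measurable f) (C : ℝ) (hC : ∀ z, |f z| ≤ C)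
    (hsupp : HasCompactSupport f)
    (q q' : ℝ → ℝ) (hq : ∀ w, HasDerivAt q (q' w) w) (hq' : Continuous q')
    (x₀ : ℝ) :
    HasDerivAt (fun x => ∫ z, q (z - c * x) * (K * Real.exp (-(g * (z - c * x)^2 / 2))) * f z)
      (∫ z, (g * c * (z - c * x₀) * q (z - c * x₀) - c * q' (z - c * x₀)) *
          (K * Real.exp (-(g * (z - c * x₀)^2 / 2))) * f z) x₀ := by
  have hqc : Continuous q := by
    rw [continuous_iff_continuousAt]; exact fun w => (hq w).continuousAt
  -- radius of support
  obtain ⟨R, hR⟩ := hsupp.isCompact.isBounded.subset_closedBall 0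
  set T : ℝ := |R| + |c| * (|x₀| + 1) with hT
  have hzT : ∀ z ∈ tsupport f, ∀ x ∈ Metric.ball x₀ 1, |z - c * x| ≤ T := by
    intro z hz x hx
    have h1 : |z| ≤ |R| := by
      have := hR hz
      rw [Metric.mem_closedBall, Real.dist_eq, sub_zero] at this
      exact this.trans (le_abs_self R)
    have h2 : |x| ≤ |x₀| + 1 := by
      rw [Metric.mem_ball, Real.dist_eq] at hx
      calc |x| = |x₀ + (x - x₀)| := by ring_nf
      _ ≤ |x₀| + |x - x₀| := abs_add_le _ _
      _ ≤ |x₀| + 1 := by linarith [hx.le]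
    calc |z - c * x| ≤ |z| + |c * x| := abs_sub _ _
    _ = |z| + |c| * |x| := by rw [abs_mul]
    _ ≤ |R| + |c| * (|x₀| + 1) := by
        gcongr
    _ = T := rfl
  -- bound on the derivative polynomial factor
  obtain ⟨Q, hQ⟩ := (isCompact_Icc (a := -T) (b := T)).exists_bound_of_continuousOn
    (Continuous.continuousOn (by fun_prop))
    (f := fun w => g * c * w * q w - c * q' w)
  have hC0 : 0 ≤ C := le_trans (abs_nonneg _) (hC 0)
  have hker_bd : ∀ (w : ℝ), K * Real.exp (-(g * w^2 / 2)) ≤ K := by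
    intro w
    have : Real.exp (-(g * w^2 / 2)) ≤ 1 := by
      apply Real.exp_le_one_iff.mpr
      have : 0 ≤ g * w^2 / 2 := by positivity
      linarith
    nlinarith [Real.exp_pos (-(g * w^2 / 2))]
  have hker_nn : ∀ (w : ℝ), 0 ≤ K * Real.exp (-(g * w^2 / 2)) := fun w => by positivity
  have hmeasset : MeasurableSet (tsupport f) := (isClosed_tsupport f).measurableSet
  set bound : ℝ → ℝ := (tsupport f).indicator (fun _ => max Q 0 * K * C) with hbound
  have hbound_int : Integrable bound := by
    rw [hbound, integrable_indicator_iff hmeasset]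
    exact integrableOn_const hsupp.isCompact.measure_lt_top.ne
  have key := hasDerivAt_integral_of_dominated_loc_of_deriv_le (μ := volume) (x₀ := x₀)
    (F := fun x z => q (z - c * x) * (K * Real.exp (-(g * (z - c * x)^2 / 2))) * f z)
    (F' := fun x z => (g * c * (z - c * x) * q (z - c * x) - c * q' (z - c * x)) *
          (K * Real.exp (-(g * (z - c * x)^2 / 2))) * f z)
    (bound := bound) (Metric.ball_mem_nhds x₀ one_pos)
    ?_ ?_ ?_ ?_ hbound_int ?_
  · exact key.2
  · filter_upwards with x
    exact (((by fun_prop : Continuous fun z : ℝ => q (z - c * x) *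
      (K * Real.exp (-(g * (z - c * x)^2 / 2)))).measurable.mul hf)).aestronglyMeasurable
  · exact aux_integrable _ f (by fun_prop) hf C hC hsupp
  · exact (((by fun_prop : Continuous fun z : ℝ => (g * c * (z - c * x₀) * q (z - c * x₀)
      - c * q' (z - c * x₀)) *
      (K * Real.exp (-(g * (z - c * x₀)^2 / 2)))).measurable.mul hf)).aestronglyMeasurable
  · filter_upwards with z
    intro x hx
    by_cases hz : z ∈ tsupport f
    · rw [hbound, Set.indicator_of_mem hz]
      have h1 : |g * c * (z - c * x) * q (z - c * x) - c * q' (z - c * x)| ≤ max Q 0 := by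
        refine le_trans ?_ (le_max_left Q 0)
        exact hQ _ (by simpa [Set.mem_Icc, abs_le.symm] using abs_le.mp (hzT z hz x hx))
      calc ‖(g * c * (z - c * x) * q (z - c * x) - c * q' (z - c * x)) *
          (K * Real.exp (-(g * (z - c * x)^2 / 2))) * f z‖
          = |g * c * (z - c * x) * q (z - c * x) - c * q' (z - c * x)| *
            (K * Real.exp (-(g * (z - c * x)^2 / 2))) * |f z| := by
            rw [Real.norm_eq_abs, abs_mul, abs_mul, abs_of_nonneg (hker_nn _)]
      _ ≤ max Q 0 * K * C := by
            apply mul_le_mul (mul_le_mul h1 (hker_bd _) (hker_nn _) (le_max_right _ _))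
              (hC z) (abs_nonneg _)
            positivity
    · rw [hbound, Set.indicator_of_notMem hz, image_eq_zero_of_notMem_tsupport hz]
      simp
  · filter_upwards with z
    intro x hx
    have hw : HasDerivAt (fun x : ℝ => z - c * x) (-c) x := by
      simpa using ((hasDerivAt_id x).const_mul c).const_sub z
    have hq1 : HasDerivAt (fun x : ℝ => q (z - c * x)) (q' (z - c * x) * (-c)) x :=
      (hq (z - c * x)).comp x hw
    have hin : HasDerivAt (fun x : ℝ => -(g * (z - c * x)^2 / 2))
        (-(g * (2 * (z - c * x) * (-c)) / 2)) x := by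
      have := (((hw.pow 2).const_mul g).div_const 2).fun_neg
      refine this.congr_deriv ?_
      ring
    have he : HasDerivAt (fun x : ℝ => Real.exp (-(g * (z - c * x)^2 / 2)))
        (Real.exp (-(g * (z - c * x)^2 / 2)) * (-(g * (2 * (z - c * x) * (-c)) / 2))) x :=
      hin.exp
    have := ((hq1.mul (he.const_mul K)).mul_const (f z))
    refine this.congr_deriv ?_
    ring

/-- The explicit variance formula for the second logarithmic derivative of `f_t`
established in the proof of Lemma 5.2 (iii) of the paper. -/
theorem ou_log_second_derivative_variance_formula
    (α t : ℝ) (hα : 0 < α) (ht : t ∈ Set.Ioc (0:ℝ) 1)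
    (f : ℝ → ℝ) (hmeas : Measurable f)
    (hbdd : ∃ C, ∀ z, f z ≤ C) (hnn : ∀ z, 0 ≤ f z)
    (hsupp : HasCompactSupport f)
    (hne : ¬ (f =ᵐ[volume] 0)) :
    ∀ x : ℝ,
      iteratedDeriv 2 (fun y => Real.log (ouPotential α f t y)) x
        = gam α t ^ 2 * Real.exp (-(2 * α * t)) *
            (ouPotential α f t x * (∫ z, z^2 * f z * ouKernel α t x z)
              - (∫ z, z * f z * ouKernel α t x z)^2) / (ouPotential α f t x)^2
          - gam α t * Real.exp (-(2 * α * t)) := by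
  obtain ⟨C, hCb⟩ := hbdd
  have hCabs : ∀ z, |f z| ≤ C := fun z => by rw [abs_of_nonneg (hnn z)]; exact hCb z
  set g : ℝ := gam α t with hgdef
  set c : ℝ := Real.exp (-(α * t)) with hcdef
  set K : ℝ := Real.sqrt (gam α t / (2 * Real.pi)) with hKdef
  have hg : 0 < g := by
    rw [hgdef]
    unfold gam
    apply div_pos (by linarith)
    have : Real.exp (-(2 * α * t)) < 1 := by
      apply Real.exp_lt_one_iff.mpr
      have := ht.1
      nlinarith
    linarith
  have hc : 0 < c := Real.exp_pos _
  have hK : 0 < K := Real.sqrt_pos.mpr (by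
    rw [← hgdef]; exact div_pos hg (by positivity))
  have hker : ∀ y z : ℝ, ouKernel α t y z = K * Real.exp (-(g * (z - c * y)^2 / 2)) :=
    fun _ _ => rfl
  have hker_cont : ∀ y : ℝ, Continuous (fun z => ouKernel α t y z) := by
    intro y
    simp only [hker]
    fun_prop
  have hker_pos : ∀ y z : ℝ, 0 < ouKernel α t y z := by
    intro y z
    rw [hker]
    positivity
  -- positivity of the potential
  have hFpos : ∀ y, 0 < ouPotential α f t y := by
    intro y
    have hint : Integrable (fun z => ouKernel α t y z * f z) :=
      aux_integrable _ f (hker_cont y) hmeas C hCabs hsupp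
    rw [ouPotential, integral_pos_iff_support_of_nonneg
      (fun z => mul_nonneg (hker_pos y z).le (hnn z)) hint]
    have hsupp_eq : (Function.support fun z => ouKernel α t y z * f z) = Function.support f := by
      ext z
      simp [Function.mem_support, mul_eq_zero, (hker_pos y z).ne']
    rw [hsupp_eq]
    rw [pos_iff_ne_zero]
    intro h
    apply hne
    rw [Filter.EventuallyEq, ae_iff]
    simpa [Function.support] using h
  -- first derivative
  have h1 : ∀ x₀ : ℝ, HasDerivAt (ouPotential α f t)
      (∫ z, g * c * (z - c * x₀) * ouKernel α t x₀ z * f z) x₀ := by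
    intro x₀
    have := aux_hasDerivAt g c K hg.le hK.le f hmeas C hCabs hsupp
      (fun _ => (1:ℝ)) (fun _ => (0:ℝ)) (fun w => hasDerivAt_const w 1) continuous_const x₀
    have heq : (fun x => ∫ z, (fun _ => (1:ℝ)) (z - c * x) *
        (K * Real.exp (-(g * (z - c * x)^2 / 2))) * f z) = ouPotential α f t := by
      funext x
      rw [ouPotential]
      simp only [hker, one_mul]
    rw [heq] at this
    convert this using 1
    simp only [hker, mul_one, mul_zero, sub_zero]
  -- second derivative function
  set D1 : ℝ → ℝ := fun y => ∫ z, g * c * (z - c * y) * ouKernel α t y z * f z with hD1def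
  have h2 : ∀ x₀ : ℝ, HasDerivAt D1
      (∫ z, (g * c * (z - c * x₀) * (g * c * (z - c * x₀)) - c * (g * c))
        * ouKernel α t x₀ z * f z) x₀ := by
    intro x₀
    have := aux_hasDerivAt g c K hg.le hK.le f hmeas C hCabs hsupp
      (fun w => g * c * w) (fun _ => g * c)
      (fun w => by simpa using (hasDerivAt_id w).const_mul (g * c)) continuous_const x₀
    have heq : (fun x => ∫ z, (fun w => g * c * w) (z - c * x) *
        (K * Real.exp (-(g * (z - c * x)^2 / 2))) * f z) = D1 := by
      funext x
      simp only [hD1def, hker]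
    rw [heq] at this
    exact this
  intro x
  -- the three moment integrals
  set I0 : ℝ := ouPotential α f t x with hI0
  set I1 : ℝ := ∫ z, z * f z * ouKernel α t x z with hI1
  set I2 : ℝ := ∫ z, z^2 * f z * ouKernel α t x z with hI2
  have intz : ∀ n : ℕ, ∀ r : ℝ, Integrable (fun z => r * (z^n * f z * ouKernel α t x z)) := by
    intro n r
    have : (fun z => r * (z^n * f z * ouKernel α t x z))
        = fun z => (r * z^n * ouKernel α t x z) * f z := by
      funext z; ring
    rw [this]
    exact aux_integrable _ f (by have := hker_cont x; fun_prop) hmeas C hCabs hsupp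
  have e0 : (∫ z, z^0 * f z * ouKernel α t x z) = I0 := by
    rw [hI0, ouPotential]; congr 1; funext z; ring
  have e1' : (∫ z, z^1 * f z * ouKernel α t x z) = I1 := by
    rw [hI1]; congr 1; funext z; ring
  have e2' : (∫ z, z^2 * f z * ouKernel α t x z) = I2 := hI2.symm
  -- key1 : D1 x in terms of moments
  have key1 : D1 x = g * c * I1 - g * c^2 * x * I0 := by
    have hD1x : D1 x = ∫ z, g * c * (z - c * x) * ouKernel α t x z * f z := rfl
    rw [hD1x]
    have : (fun z => g * c * (z - c * x) * ouKernel α t x z * f z)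
        = fun z => g * c * (z^1 * f z * ouKernel α t x z)
          - g * c^2 * x * (z^0 * f z * ouKernel α t x z) := by
      funext z; ring
    rw [this, integral_sub (intz 1 _) (intz 0 _), integral_const_mul, integral_const_mul,
      e1', e0]
  have key2 : (∫ z, (g * c * (z - c * x) * (g * c * (z - c * x)) - c * (g * c))
        * ouKernel α t x z * f z)
      = g^2 * c^2 * I2 - 2 * g^2 * c^3 * x * I1 + (g^2 * c^4 * x^2 - g * c^2) * I0 := by
    have : (fun z => (g * c * (z - c * x) * (g * c * (z - c * x)) - c * (g * c))
          * ouKernel α t x z * f z)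
        = fun z => (g^2 * c^2 * (z^2 * f z * ouKernel α t x z)
            - 2 * g^2 * c^3 * x * (z^1 * f z * ouKernel α t x z))
          + (g^2 * c^4 * x^2 - g * c^2) * (z^0 * f z * ouKernel α t x z) := by
      funext z; ring
    have hint12 : Integrable (fun z => g^2 * c^2 * (z^2 * f z * ouKernel α t x z)
        - 2 * g^2 * c^3 * x * (z^1 * f z * ouKernel α t x z)) := (intz 2 _).sub (intz 1 _)
    rw [this, integral_add hint12 (intz 0 _), integral_sub (intz 2 _) (intz 1 _),
      integral_const_mul, integral_const_mul, integral_const_mul, e2', e1', e0]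
  -- assemble
  have hlog : deriv (fun y => Real.log (ouPotential α f t y))
      = fun y => D1 y / ouPotential α f t y :=
    funext fun y => ((h1 y).log (hFpos y).ne').deriv
  have hstep : iteratedDeriv 2 (fun y => Real.log (ouPotential α f t y)) x
      = deriv (deriv (fun y => Real.log (ouPotential α f t y))) x := by
    rw [show (2:ℕ) = 1 + 1 from rfl, iteratedDeriv_succ, iteratedDeriv_one]
  rw [hstep, hlog]
  have hdiv : HasDerivAt (fun y => D1 y / ouPotential α f t y)
      (((∫ z, (g * c * (z - c * x) * (g * c * (z - c * x)) - c * (g * c))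
        * ouKernel α t x z * f z) * ouPotential α f t x - D1 x * D1 x)
        / (ouPotential α f t x)^2) x :=
    (h2 x).div (h1 x) (hFpos x).ne'
  rw [hdiv.deriv, key1, key2]
  have hc2 : Real.exp (-(2 * α * t)) = c^2 := by
    rw [hcdef, sq, ← Real.exp_add]
    congr 1
    ring
  rw [hc2]
  have hI0ne : I0 ≠ 0 := (hFpos x).ne'
  rw [← hI0]
  field_simp
  ring
end
end
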